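/- arXiv:2210.02394 — 9 statements merged into one kernel-verified Lean document; each statement's English description precedes it below -/
import Mathlib

section
/- Let d ≥ 0 be an integer, let n_0, …, n_{4d+1} be positive integers, and let G be the circular graph S_d(n_0, …, n_{4d+1}) with clusters V_0, …, V_{4d+1}. Then for every edge (u,v) of G there are at least 2d + 2 indices j ∈ {0, …, 4d+1} such that for every vertex w ∈ V_j with w ∉ {u, v}, the triad {u, v, w} is balanced in G. -/
open Finset

/-- A signed graph on `n` vertices: `true` = friendship (+1), `false` = enmity (−1). -/
abbrev SignedGraph (n : ℕ) := Fin n → Fin n → Bool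

/-- The sign assignment is symmetric (it is an assignment to undirected edges). -/
def Symm {n : ℕ} (G : SignedGraph n) : Prop := ∀ u v, G u v = G v u

/-- The triad `{u,v,w}` is balanced: it contains an even number (0 or 2) of enmity edges. -/
def BalancedTriad {n : ℕ} (G : SignedGraph n) (u v w : Fin n) : Prop :=
  Bool.xor (G u v) (Bool.xor (G v w) (G u w)) = true

instance {n : ℕ} (G : SignedGraph n) (u v w : Fin n) :
    Decidable (BalancedTriad G u v w) :=
  inferInstanceAs (Decidable (_ = true))

/-- The rank of the edge `(u,v)`: the number of imbalanced triads containing it. -/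
def rank {n : ℕ} (G : SignedGraph n) (u v : Fin n) : ℕ :=
  (univ.filter (fun w => w ≠ u ∧ w ≠ v ∧ ¬ BalancedTriad G u v w)).card

/-- A signed graph is balanced if every triad is balanced. -/
def IsBalanced {n : ℕ} (G : SignedGraph n) : Prop :=
  ∀ u v w : Fin n, u ≠ v → v ≠ w → u ≠ w → BalancedTriad G u v w

/-- A signed graph is jammed if it is not balanced and every edge `e`
satisfies `2 * r_e < n - 2`. -/
def IsJammed {n : ℕ} (G : SignedGraph n) : Prop :=
  ¬ IsBalanced G ∧ ∀ u v : Fin n, u ≠ v → 2 * rank G u v < n - 2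

/-- Flipping (reversing the sign of) the undirected edge `p`. -/
def flipEdge {n : ℕ} (G : SignedGraph n) (p : Sym2 (Fin n)) : SignedGraph n :=
  fun x y => if s(x, y) = p then !(G x y) else G x y

/-- A CTD-admissible flipEdge: the edge lies in some imbalanced triad and `2 r_e ≥ n - 2`. -/
def CTDAdmissible {n : ℕ} (G : SignedGraph n) (p : Sym2 (Fin n)) : Prop :=
  ∃ u v : Fin n, p = s(u, v) ∧ u ≠ v ∧
    (∃ w, w ≠ u ∧ w ≠ v ∧ ¬ BalancedTriad G u v w) ∧
    n - 2 ≤ 2 * rank G u v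

/-- A BED-admissible flipEdge: there is an imbalanced triad containing the edge
in which the edge has maximal rank. -/
def BEDAdmissible {n : ℕ} (G : SignedGraph n) (p : Sym2 (Fin n)) : Prop :=
  ∃ u v w : Fin n, p = s(u, v) ∧ u ≠ v ∧ w ≠ u ∧ w ≠ v ∧
    ¬ BalancedTriad G u v w ∧
    rank G v w ≤ rank G u v ∧ rank G u w ≤ rank G u v

/-- `FlipSeq Adm G L H`: the list of edges `L` is a sequence of `Adm`-admissible flips
transforming `G` into `H`. -/
inductive FlipSeq {n : ℕ} (Adm : SignedGraph n → Sym2 (Fin n) → Prop) :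
    SignedGraph n → List (Sym2 (Fin n)) → SignedGraph n → Prop
  | nil (G : SignedGraph n) : FlipSeq Adm G [] G
  | cons {G H : SignedGraph n} {L : List (Sym2 (Fin n))} (p : Sym2 (Fin n)) :
      Adm G p → FlipSeq Adm (flipEdge G p) L H → FlipSeq Adm G (p :: L) H

/-- Circular distance between cluster indices. -/
def circDist {m : ℕ} (i j : Fin m) : ℕ := min (i - j : Fin m).val (j - i : Fin m).val

/-- The circular graph: given a cluster assignment `c`, an edge is a friendship iff
its endpoints lie in clusters at circular distance at most `k`. -/
def circular {n m : ℕ} (c : Fin n → Fin m) (k : ℕ) : SignedGraph n :=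
  fun u v => decide (circDist (c u) (c v) ≤ k)

/-- The jammed state `J_n`: three fixed clusters of size `n/3`, friendships inside
clusters, enmities across. -/
def Jn (n : ℕ) : SignedGraph n :=
  fun u v => decide (u.val / (n / 3) = v.val / (n / 3))

/-- The signed graph obtained from `G` by flipping exactly the edges in `F`. -/
def perturb {n : ℕ} (G : SignedGraph n) (F : Finset (Sym2 (Fin n))) : SignedGraph n :=
  fun u v => if s(u, v) ∈ F then !(G u v) else G u v

/-- The set of (undirected, non-diagonal) edges on which two signed graphs differ. -/
def diffEdges {n : ℕ} (G C : SignedGraph n) : Finset (Sym2 (Fin n)) :=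
  univ.filter (fun p => ∃ u v : Fin n, p = s(u, v) ∧ u ≠ v ∧ G u v ≠ C u v)

/-- `C` is a closest balanced state to `G`: `C` is balanced and minimizes the number of
edges on which the signs differ from `G`. -/
def IsClosestBalanced {n : ℕ} (G C : SignedGraph n) : Prop :=
  Symm C ∧ IsBalanced C ∧
    ∀ C' : SignedGraph n, Symm C' → IsBalanced C' →
      (diffEdges G C).card ≤ (diffEdges G C').card

/-- The two sides of the balanced state `B_n`: clusters `0, 1, 5` versus `2, 3, 4`. -/
def sixPart (i : Fin 6) : Bool := decide (i = 0 ∨ i = 1 ∨ i = 5)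

/-- The balanced state `B_n` whose friendship parts are `V₀ ∪ V₁ ∪ V₅` and `V₂ ∪ V₃ ∪ V₄`. -/
def Bgraph {n : ℕ} (c : Fin n → Fin 6) : SignedGraph n :=
  fun u v => sixPart (c u) == sixPart (c v)

/-- The number of good triads containing the red edge `(u,v)`: imbalanced triads in which
the red edge has strictly greater rank than each of the other two edges. -/
def goodCount {n : ℕ} (G : SignedGraph n) (u v : Fin n) : ℕ :=
  (univ.filter (fun w => w ≠ u ∧ w ≠ v ∧ ¬ BalancedTriad G u v w ∧
    rank G v w < rank G u v ∧ rank G u w < rank G u v)).card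

/-- The number of bad triads containing the red edge `(u,v)`: imbalanced triads that
are not good. -/
def badCount {n : ℕ} (G : SignedGraph n) (u v : Fin n) : ℕ :=
  (univ.filter (fun w => w ≠ u ∧ w ≠ v ∧ ¬ BalancedTriad G u v w ∧
    ¬ (rank G v w < rank G u v ∧ rank G u w < rank G u v))).card
lemma subval' {d : ℕ} (x s : Fin (4*d+2)) :
    (x - s).val + s.val = x.val ∨ (x - s).val + s.val = x.val + (4*d+2) := by
  have hx := x.isLt; have hs := s.isLt
  rw [Fin.sub_def]
  rcases le_or_gt s.val x.val with h | h
  · left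
    have e : (4*d+2) - s.val + x.val = (4*d+2) + (x.val - s.val) := by omega
    simp only [e, Nat.add_mod_left, Nat.mod_eq_of_lt (by omega : x.val - s.val < 4*d+2)]
    omega
  · right
    simp only [Nat.mod_eq_of_lt (by omega : (4*d+2) - s.val + x.val < 4*d+2)]
    omega

lemma circ_le {d : ℕ} (a x : Fin (4*d+2)) :
    circDist a (a + x) ≤ d ↔ (x.val ≤ d ∨ 3*d+2 ≤ x.val) := by
  haveI : NeZero (4*d+2) := ⟨by omega⟩
  have e1 : a - (a + x) = 0 - x := by abel
  have e2 : (a + x) - a = x := by abel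
  unfold circDist
  rw [e1, e2, min_le_iff]
  have h := subval' (0 : Fin (4*d+2)) x
  have h0 : (0 : Fin (4*d+2)).val = 0 := rfl
  have hx := x.isLt
  have hy := (0 - x : Fin (4*d+2)).isLt
  omega

lemma xor3_iff (p q r : Prop) [Decidable p] [Decidable q] [Decidable r] :
    (Bool.xor (decide p) (Bool.xor (decide q) (decide r)) = true) ↔ (p ↔ (q ↔ r)) := by
  by_cases p <;> by_cases q <;> by_cases r <;> simp [*]

lemma balanced_iff {d n : ℕ} (c : Fin n → Fin (4*d+2)) (u v w : Fin n)
    (s x : Fin (4*d+2)) (hv : c v = c u + s) (hw : c w = c u + x) :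
    BalancedTriad (circular c d) u v w ↔
      ((s.val ≤ d ∨ 3*d+2 ≤ s.val) ↔
        (((x - s).val ≤ d ∨ 3*d+2 ≤ (x - s).val) ↔ (x.val ≤ d ∨ 3*d+2 ≤ x.val))) := by
  haveI : NeZero (4*d+2) := ⟨by omega⟩
  unfold BalancedTriad circular
  rw [xor3_iff, hv, hw]
  have e : circDist (c u + s) (c u + x) = circDist (c u + s) ((c u + s) + (x - s)) := by
    rw [show c u + x = (c u + s) + (x - s) from by abel]
  rw [e, circ_le, circ_le, circ_le]

lemma main_aux {d n : ℕ} (c : Fin n → Fin (4*d+2)) (u v : Fin n)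
    (s : Fin (4*d+2)) (hv : c v = c u + s)
    (xf : ℕ → ℕ)
    (hlt : ∀ i, i < 2*d+2 → xf i < 4*d+2)
    (hinj : ∀ i j, i < 2*d+2 → j < 2*d+2 → xf i = xf j → i = j)
    (hcond : ∀ i, i < 2*d+2 → ∀ y, y < 4*d+2 →
      (y + s.val = xf i ∨ y + s.val = xf i + (4*d+2)) →
      ((s.val ≤ d ∨ 3*d+2 ≤ s.val) ↔ ((y ≤ d ∨ 3*d+2 ≤ y) ↔ (xf i ≤ d ∨ 3*d+2 ≤ xf i)))) :
    2*d+2 ≤ (univ.filter (fun j : Fin (4*d+2) =>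
      ∀ w : Fin n, c w = j → w ≠ u → w ≠ v →
        BalancedTriad (circular c d) u v w)).card := by
  have := Finset.card_le_card_of_injOn
    (s := (univ : Finset (Fin (2*d+2))))
    (f := fun i : Fin (2*d+2) => c u + ⟨xf i.val, hlt i.val i.isLt⟩)
    (t := (univ.filter (fun j : Fin (4*d+2) =>
      ∀ w : Fin n, c w = j → w ≠ u → w ≠ v →
        BalancedTriad (circular c d) u v w)))
    ?mem ?inj
  · simpa using this
  · intro i _
    simp only [coe_filter, mem_filter, mem_univ, true_and, Set.mem_setOf_eq, mem_coe]
    intro w hw _ _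
    set x : Fin (4*d+2) := ⟨xf i.val, hlt i.val i.isLt⟩ with hx
    rw [balanced_iff c u v w s x hv hw]
    exact hcond i.val i.isLt (x - s).val (x - s).isLt (subval' x s)
  · intro i _ j _ h
    have h2 : (⟨xf i.val, hlt i.val i.isLt⟩ : Fin (4*d+2)) = ⟨xf j.val, hlt j.val j.isLt⟩ :=
      add_left_cancel h
    exact Fin.ext (hinj i.val j.val i.isLt j.isLt (congrArg Fin.val h2))


/-- In the circular graph `S_d(n_0, …, n_{4d+1})`, every edge has at least
`2d + 2` clusters all of whose vertices form a balanced triad with it. -/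
theorem circular_balanced_clusters (d n : ℕ) (c : Fin n → Fin (4 * d + 2))
    (hpos : ∀ j : Fin (4 * d + 2), ∃ u : Fin n, c u = j)
    (u v : Fin n) (huv : u ≠ v) :
    2 * d + 2 ≤ (univ.filter (fun j : Fin (4 * d + 2) =>
      ∀ w : Fin n, c w = j → w ≠ u → w ≠ v →
        BalancedTriad (circular c d) u v w)).card := by
  haveI : NeZero (4*d+2) := ⟨by omega⟩
  set s : Fin (4*d+2) := c v - c u with hs
  have hv : c v = c u + s := by rw [hs]; abel
  have hslt := s.isLt
  rcases le_or_gt s.val d with h1 | h1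
  · exact main_aux c u v s hv (fun i => if i ≤ d then i else i + s.val)
      (by intro i hi; split <;> omega)
      (by intro i j hi hj h; split_ifs at h <;> omega)
      (by intro i hi y hy hor; split_ifs at hor ⊢ <;> omega)
  rcases le_or_gt s.val (2*d+1) with h2 | h2
  · exact main_aux c u v s hv (fun i => if i = 0 then 0 else if i ≤ d+1 then s.val + i - 1 else 2*d + i)
      (by intro i hi; split_ifs <;> omega)
      (by intro i j hi hj h; split_ifs at h <;> omega)
      (by intro i hi y hy hor; split_ifs at hor ⊢ <;> omega)
  rcases le_or_gt s.val (3*d+1) with h3 | h3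
  · exact main_aux c u v s hv (fun i => if i ≤ d then i else s.val + i - (2*d + 1))
      (by intro i hi; split <;> omega)
      (by intro i j hi hj h; split_ifs at h <;> omega)
      (by intro i hi y hy hor; split_ifs at hor ⊢ <;> omega)
  · exact main_aux c u v s hv (fun i => if i = 0 then 0 else if i ≤ d+1 then d + i else 2*d + i)
      (by intro i hi; split_ifs <;> omega)
      (by intro i j hi hj h; split_ifs at h <;> omega)
      (by intro i hi y hy hor; split_ifs at hor ⊢ <;> omega)
end

section
/- For every integer d ≥ 1, the circular graph S_d(2, 2, …, 2) with 4d + 2 clusters each of size 2 (hence n = 8d + 4 vertices) is jammed. -/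
open Finset

lemma fin_sub_val {m : ℕ} (a b : Fin m) :
    (a - b).val = if a.val < b.val then a.val + m - b.val else a.val - b.val := by
  have hm : 0 < m := a.pos
  have ha := a.isLt; have hb := b.isLt
  rw [Fin.sub_def]
  simp only
  split_ifs with h
  · rw [Nat.mod_eq_of_lt (by omega)]; omega
  · have : m - b.val + a.val = (a.val - b.val) + m := by omega
    rw [this, Nat.add_mod_right, Nat.mod_eq_of_lt (by omega)]

lemma circDist_le_iff {d : ℕ} (i l : Fin (4*d+2)) :
    (circDist i l ≤ d) ↔ ((l - i).val ≤ d ∨ 3*d+2 ≤ (l - i).val) := by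
  have h1 := fin_sub_val i l
  have h2 := fin_sub_val l i
  have := i.isLt; have := l.isLt
  unfold circDist
  rw [Nat.min_def]
  split_ifs at h1 h2 ⊢ <;> omega

abbrev CyP (d s y : ℕ) : Prop :=
  (s ≤ d ∧ ((d+1 ≤ y ∧ y ≤ d+s) ∨ (3*d+2 ≤ y ∧ y ≤ 3*d+1+s))) ∨
  (d+1 ≤ s ∧ ((s-d ≤ y ∧ y ≤ d) ∨ (s+d+1 ≤ y ∧ y ≤ 3*d+1)))

lemma circDist_eq_s {d : ℕ} (i j : Fin (4*d+2)) (hs2 : (j - i).val ≤ 2*d+1) :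
    circDist i j = (j - i).val := by
  have h1 := fin_sub_val i j
  have h2 := fin_sub_val j i
  have := i.isLt; have := j.isLt
  unfold circDist
  rw [Nat.min_def]
  split_ifs at h1 h2 ⊢ <;> omega

lemma char_lemma (d : ℕ) (i j l : Fin (4*d+2)) (hs1 : 1 ≤ (j - i).val)
    (hs2 : (j - i).val ≤ 2*d+1)
    (h : ¬ (Bool.xor (decide (circDist i j ≤ d))
        (Bool.xor (decide (circDist j l ≤ d)) (decide (circDist i l ≤ d))) = true)) :
    CyP d (j - i).val ((l - i).val) := by
  haveI : NeZero (4*d+2) := ⟨by omega⟩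
  have hylt : (l - i).val < 4*d+2 := (l - i).isLt
  have hC' : (circDist i l ≤ d) ↔ ((l - i).val ≤ d ∨ 3*d+2 ≤ (l - i).val) :=
    circDist_le_iff i l
  have e : (l - j) = (l - i) - (j - i) := (sub_sub_sub_cancel_right l j i).symm
  have h4 : (l - j).val = if (l - i).val < (j - i).val
      then (l - i).val + (4*d+2) - (j - i).val else (l - i).val - (j - i).val := by
    rw [e, fin_sub_val]
  have hB' : (circDist j l ≤ d) ↔ ((l - j).val ≤ d ∨ 3*d+2 ≤ (l - j).val) :=
    circDist_le_iff j l
  have hA' : circDist i j = (j - i).val := circDist_eq_s i j hs2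
  by_cases hA : circDist i j ≤ d <;> by_cases hB : circDist j l ≤ d <;>
    by_cases hC : circDist i l ≤ d <;>
    simp only [hA, hB, hC, decide_eq_true_eq, Bool.xor_false, Bool.xor_true,
      Bool.true_xor, Bool.false_xor, Bool.not_true, Bool.not_false, Bool.not_not,
      decide_true, decide_false, decide_eq_false_iff_not, not_true, not_false_iff,
      decide_eq_true] at h <;>
  · rw [hA'] at hA
    rw [hC'] at hC
    rw [hB'] at hB
    rw [h4] at hB
    unfold CyP
    split_ifs at hB <;> omega

def phiF (d s y : ℕ) : ℕ :=
  if y ≤ d then y + d - s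
  else if y ≤ d + s then y - (d+1)
  else if y ≤ 3*d+1 then y + d - 2*s
  else y - (3*d+2) + s

lemma card_bad (d : ℕ) (i j : Fin (4*d+2)) (hs1 : 1 ≤ (j - i).val)
    (hs2 : (j - i).val ≤ 2*d+1) :
    (univ.filter (fun l : Fin (4*d+2) => CyP d (j - i).val ((l - i).val))).card ≤ 2*d := by
  haveI : NeZero (4*d+2) := ⟨by omega⟩
  have key : (univ.filter (fun l : Fin (4*d+2) => CyP d (j - i).val ((l - i).val))).card
      ≤ (Finset.range (2*d)).card := by
    apply Finset.card_le_card_of_injOn (fun l => phiF d (j - i).val ((l - i).val))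
    · intro l hl
      simp only [Finset.mem_coe, mem_filter, mem_univ, true_and] at hl
      simp only [Finset.mem_coe, Finset.mem_range]
      unfold CyP at hl
      unfold phiF
      split_ifs <;> omega
    · intro l1 h1 l2 h2 heq
      simp only [Finset.coe_filter, Set.mem_setOf_eq, mem_filter, mem_univ, true_and] at h1 h2
      unfold CyP at h1 h2
      simp only [phiF] at heq
      have hveq : (l1 - i).val = (l2 - i).val := by
        split_ifs at heq <;> omega
      have : l1 - i = l2 - i := Fin.ext hveq
      exact sub_left_injective this
  simpa using key

lemma rank_main (d : ℕ) (c : Fin (8*d+4) → Fin (4*d+2))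
    (hsize : ∀ j : Fin (4*d+2),
      (univ.filter (fun u : Fin (8*d+4) => c u = j)).card = 2)
    (u v : Fin (8*d+4)) (hs1 : 1 ≤ (c v - c u).val) (hs2 : (c v - c u).val ≤ 2*d+1) :
    rank (circular c d) u v ≤ 4*d := by
  set i := c u with hi
  set j := c v with hj
  set T := univ.filter (fun w : Fin (8*d+4) => CyP d (j - i).val ((c w - i).val)) with hT
  set B := univ.filter (fun l : Fin (4*d+2) => CyP d (j - i).val ((l - i).val)) with hBdef
  have hsub : (univ.filter (fun w : Fin (8*d+4) =>
      w ≠ u ∧ w ≠ v ∧ ¬ BalancedTriad (circular c d) u v w)) ⊆ T := by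
    intro w hw
    simp only [hT, mem_filter, mem_univ, true_and] at hw ⊢
    exact char_lemma d i j (c w) hs1 hs2 hw.2.2
  have hfib : T.card = ∑ l ∈ B, (T.filter (fun w => c w = l)).card := by
    apply Finset.card_eq_sum_card_fiberwise
    intro w hw
    simp only [hT, Finset.mem_coe, mem_filter, mem_univ, true_and] at hw
    simp only [hBdef, Finset.mem_coe, mem_filter, mem_univ, true_and]
    exact hw
  have hbound : ∑ l ∈ B, (T.filter (fun w => c w = l)).card ≤ ∑ _l ∈ B, 2 := by
    apply Finset.sum_le_sum
    intro l _
    calc (T.filter (fun w => c w = l)).card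
        ≤ (univ.filter (fun w : Fin (8*d+4) => c w = l)).card := by
          apply Finset.card_le_card
          intro w hw
          simp only [hT, mem_filter, mem_univ, true_and] at hw ⊢
          exact hw.2
      _ = 2 := hsize l
  have hBcard : B.card ≤ 2*d := card_bad d i j hs1 hs2
  calc rank (circular c d) u v ≤ T.card := Finset.card_le_card hsub
    _ = ∑ l ∈ B, (T.filter (fun w => c w = l)).card := hfib
    _ ≤ ∑ _l ∈ B, 2 := hbound
    _ = 2 * B.card := by rw [Finset.sum_const, smul_eq_mul, mul_comm]
    _ ≤ 4*d := by omega

lemma circular_symm {n m : ℕ} (c : Fin n → Fin m) (k : ℕ) (a b : Fin n) :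
    circular c k a b = circular c k b a := by
  unfold circular circDist
  rw [Nat.min_comm]

lemma rank_symm {n m : ℕ} (c : Fin n → Fin m) (k : ℕ) (u v : Fin n) :
    rank (circular c k) u v = rank (circular c k) v u := by
  unfold rank
  congr 1
  apply Finset.filter_congr
  intro w _
  have hbal : BalancedTriad (circular c k) u v w ↔ BalancedTriad (circular c k) v u w := by
    unfold BalancedTriad
    rw [circular_symm c k u v, Bool.xor_comm (circular c k v w) (circular c k u w)]
  tauto

lemma rank_same {n m : ℕ} (c : Fin n → Fin m) (k : ℕ) (u v : Fin n)
    (h : c u = c v) : rank (circular c k) u v = 0 := by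
  rw [rank, Finset.card_eq_zero, Finset.filter_eq_empty_iff]
  intro w _
  simp only [not_and, not_not]
  intro _ _
  unfold BalancedTriad circular circDist
  rw [h]
  have hz : ((c v - c v)).val = 0 := by rw [fin_sub_val, if_neg (lt_irrefl _)]; omega
  simp [hz, Bool.xor_self]

lemma exists_in_cluster (d : ℕ) (c : Fin (8*d+4) → Fin (4*d+2))
    (hsize : ∀ j : Fin (4*d+2),
      (univ.filter (fun u : Fin (8*d+4) => c u = j)).card = 2)
    (l : Fin (4*d+2)) : ∃ u, c u = l := by
  have h := hsize l
  have hne : (univ.filter (fun u : Fin (8*d+4) => c u = l)).Nonempty := by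
    rw [← Finset.card_pos, h]; omega
  obtain ⟨u, hu⟩ := hne
  exact ⟨u, (mem_filter.mp hu).2⟩

/-- For `d ≥ 1`, the circular graph `S_d(2, 2, …, 2)` with `4d + 2`
clusters of size `2` (hence `n = 8d + 4` vertices) is jammed. -/
theorem circular_two_jammed (d : ℕ) (hd : 1 ≤ d)
    (c : Fin (8 * d + 4) → Fin (4 * d + 2))
    (hsize : ∀ j : Fin (4 * d + 2),
      (univ.filter (fun u : Fin (8 * d + 4) => c u = j)).card = 2) :
    IsJammed (circular c d) := by
  constructor
  · intro hbal
    set k0 : Fin (4*d+2) := ⟨0, by omega⟩ with hk0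
    set k1 : Fin (4*d+2) := ⟨d+1, by omega⟩ with hk1
    set k2 : Fin (4*d+2) := ⟨2*d+2, by omega⟩ with hk2
    obtain ⟨u, hu⟩ := exists_in_cluster d c hsize k0
    obtain ⟨v, hv⟩ := exists_in_cluster d c hsize k1
    obtain ⟨w, hw⟩ := exists_in_cluster d c hsize k2
    have huv : u ≠ v := by
      intro h; rw [h, hv] at hu; exact absurd (congrArg Fin.val hu) (by simp [hk0, hk1])
    have hvw : v ≠ w := by
      intro h; rw [h, hw] at hv; exact absurd (congrArg Fin.val hv) (by simp [hk1, hk2]; omega)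
    have huw : u ≠ w := by
      intro h; rw [h, hw] at hu; exact absurd (congrArg Fin.val hu) (by simp [hk0, hk2])
    have hb := hbal u v w huv hvw huw
    unfold BalancedTriad circular at hb
    rw [hu, hv, hw] at hb
    have c1 : ¬ circDist k0 k1 ≤ d := by
      have e1 := fin_sub_val k0 k1
      have e2 := fin_sub_val k1 k0
      have h1 : k0.val = 0 := rfl
      have h2 : k1.val = d+1 := rfl
      rw [h1, h2] at e1 e2
      unfold circDist
      rw [Nat.min_def]
      split_ifs at e1 e2 ⊢ <;> omega
    have c2 : ¬ circDist k1 k2 ≤ d := by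
      have e1 := fin_sub_val k1 k2
      have e2 := fin_sub_val k2 k1
      have h1 : k1.val = d+1 := rfl
      have h2 : k2.val = 2*d+2 := rfl
      rw [h1, h2] at e1 e2
      unfold circDist
      rw [Nat.min_def]
      split_ifs at e1 e2 ⊢ <;> omega
    have c3 : ¬ circDist k0 k2 ≤ d := by
      have e1 := fin_sub_val k0 k2
      have e2 := fin_sub_val k2 k0
      have h1 : k0.val = 0 := rfl
      have h2 : k2.val = 2*d+2 := rfl
      rw [h1, h2] at e1 e2
      unfold circDist
      rw [Nat.min_def]
      split_ifs at e1 e2 ⊢ <;> omega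
    simp [c1, c2, c3] at hb
  · intro u v _
    suffices h : rank (circular c d) u v ≤ 4*d by omega
    by_cases h0 : (c v - c u).val = 0
    · have : c v - c u = 0 := by
        apply Fin.ext
        rw [h0, Fin.val_zero]
      have hc : c u = c v := by
        have := sub_eq_zero.mp this
        exact this.symm
      rw [rank_same c d u v hc]
      omega
    · by_cases h1 : (c v - c u).val ≤ 2*d+1
      · exact rank_main d c hsize u v (by omega) h1
      · rw [rank_symm]
        apply rank_main d c hsize v u <;>
        · have e1 := fin_sub_val (c u) (c v)
          have e2 := fin_sub_val (c v) (c u)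
          have := (c u).isLt
          have := (c v).isLt
          split_ifs at e1 e2 <;> omega
end

section
/- For every integer d ≥ 1 and n = 8d + 4, the number of jammed signed graphs on the labeled vertex set {1, …, n} is at least (n − 1)! / 2^{n/2}. -/
open Finset

namespace CJ


/-- friendship between clusters `a b < 4d+2` : circular distance ≤ d. -/
def fr (d a b : ℕ) : Bool :=
  decide ((b ≤ a + d ∧ a ≤ b + d) ∨ b + (3*d+2) ≤ a ∨ a + (3*d+2) ≤ b)

lemma fr_symm (d a b : ℕ) : fr d a b = fr d b a := by
  simp only [fr, decide_eq_decide]; omega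

lemma fr_self (d a : ℕ) : fr d a a = true := by
  simp only [fr, decide_eq_true_eq]; omega

/-- antipodal cluster -/
def antip (d a : ℕ) : ℕ := if a < 2*d+1 then a + (2*d+1) else a - (2*d+1)

lemma antip_lt {d a : ℕ} (ha : a < 4*d+2) : antip d a < 4*d+2 := by
  unfold antip; split <;> omega

lemma fr_antip {d a c : ℕ} (ha : a < 4*d+2) (hc : c < 4*d+2) :
    fr d (antip d a) c = !(fr d a c) := by
  unfold antip
  split <;> simp only [fr, ← decide_not, decide_eq_decide] <;> omega

lemma sep {d a b : ℕ} (hab : a ≠ b) (ha : a < 4*d+2) (hb : b < 4*d+2) :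
    ∃ c, c < 4*d+2 ∧ fr d a c ≠ fr d b c := by
  by_cases hA : (a < b ∧ b ≤ a + d) ∨ b + (3*d+2) ≤ a
  · refine ⟨if d ≤ a then a - d else a + (3*d + 2), by split <;> omega, ?_⟩
    have h1 : fr d a (if d ≤ a then a - d else a + (3*d + 2)) = true := by
      simp only [fr, decide_eq_true_eq]; split <;> omega
    have h2 : fr d b (if d ≤ a then a - d else a + (3*d + 2)) = false := by
      simp only [fr, decide_eq_false_iff_not]; split <;> omega
    rw [h1, h2]; simp
  · by_cases hB : (b < a ∧ a ≤ b + d) ∨ a + (3*d+2) ≤ b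
    · refine ⟨if d ≤ b then b - d else b + (3*d + 2), by split <;> omega, ?_⟩
      have h1 : fr d a (if d ≤ b then b - d else b + (3*d + 2)) = false := by
        simp only [fr, decide_eq_false_iff_not]; split <;> omega
      have h2 : fr d b (if d ≤ b then b - d else b + (3*d + 2)) = true := by
        simp only [fr, decide_eq_true_eq]; split <;> omega
      rw [h1, h2]; simp
    · refine ⟨a, ha, ?_⟩
      have h1 : fr d a a = true := fr_self d a
      have h2 : fr d b a = false := by
        simp only [fr, decide_eq_false_iff_not]; omega
      rw [h1, h2]; simp



/-- symmetric-difference bound, one-sided case: `b = a + t (mod m)` with `t ≤ d`. -/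
lemma sdiff_le' {d a b : ℕ} (ha : a < 4*d+2) (hb : b < 4*d+2)
    (hA : (a ≤ b ∧ b ≤ a + d) ∨ b + (3*d+2) ≤ a) :
    ((range (4*d+2)).filter fun c => fr d a c ≠ fr d b c).card ≤ 2*d := by
  have h := Finset.card_le_card_of_injOn
    (f := fun c => if a ≤ c then c - a else c + (4*d+2) - a)
    (s := (range (4*d+2)).filter fun c => fr d a c ≠ fr d b c)
    (t := (Ico (d+1) (2*d+1)) ∪ (Ico (3*d+2) (4*d+2)))
    ?_ ?_
  · refine le_trans h ?_
    refine le_trans (Finset.card_union_le _ _) ?_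
    rw [Nat.card_Ico, Nat.card_Ico]; omega
  · intro c hc
    simp only [Finset.mem_coe, mem_filter, mem_range, ne_eq] at hc
    obtain ⟨hcm, hne⟩ := hc
    have hne' : ¬ (fr d a c = true ↔ fr d b c = true) := by
      intro h; apply hne; cases h1 : fr d a c <;> cases h2 : fr d b c <;> simp_all
    simp only [fr, decide_eq_true_eq] at hne'
    simp only [Finset.mem_coe, mem_union, mem_Ico]
    split <;> omega
  · intro c1 h1 c2 h2 h
    simp only [coe_filter, Set.mem_setOf_eq, mem_range] at h1 h2
    simp only at h
    split at h <;> split at h <;> omega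

lemma sdiff_le {d a b : ℕ} (ha : a < 4*d+2) (hb : b < 4*d+2) (hfr : fr d a b = true) :
    ((range (4*d+2)).filter fun c => fr d a c ≠ fr d b c).card ≤ 2*d := by
  by_cases hA : (a ≤ b ∧ b ≤ a + d) ∨ b + (3*d+2) ≤ a
  · exact sdiff_le' ha hb hA
  · have hB : (b ≤ a ∧ a ≤ b + d) ∨ a + (3*d+2) ≤ b := by
      simp only [fr, decide_eq_true_eq] at hfr; omega
    rw [Finset.filter_congr (fun c _ => by rw [ne_comm])]
    exact sdiff_le' hb ha hB


def Adj1 (d a b : ℕ) : Prop :=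
  b = a+1 ∨ a = b + (4*d+1) ∨ a = b+1 ∨ b = a + (4*d+1)

lemma Pchar {d a b : ℕ} (hd : 1 ≤ d) (ha : a < 4*d+2) (hb : b < 4*d+2) :
    (a ≠ b ∧ fr d a b = true ∧ ∃ c, c < 4*d+2 ∧ fr d a c = true ∧ fr d b c = false ∧
      ∀ c', c' < 4*d+2 → fr d a c' = true → fr d b c' = false → c' = c) ↔ Adj1 d a b := by
  constructor
  · rintro ⟨hne, hfr, c, hcm, h1, h2, huniq⟩
    by_contra hAdj
    unfold Adj1 at hAdj
    simp only [fr, decide_eq_true_eq] at hfr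
    have hcase : ((a + 2 ≤ b ∧ b ≤ a + d) ∨ (b + (3*d+2) ≤ a ∧ a ≤ b + 4*d)) ∨
        ((b + 2 ≤ a ∧ a ≤ b + d) ∨ (a + (3*d+2) ≤ b ∧ b ≤ a + 4*d)) := by omega
    rcases hcase with hA | hB
    · set w1 := if d ≤ a then a - d else a + (3*d+2) with hw1
      set w2 := if d ≤ a then a - d + 1 else if a = d - 1 then 0 else a + 3*d+3 with hw2
      have e1 : fr d a w1 = true := by
        simp only [fr, decide_eq_true_eq, hw1]; split <;> omega
      have e2 : fr d b w1 = false := by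
        simp only [fr, decide_eq_false_iff_not, hw1]; split <;> omega
      have e3 : fr d a w2 = true := by
        simp only [fr, decide_eq_true_eq, hw2]; split <;> [omega; (split <;> omega)]
      have e4 : fr d b w2 = false := by
        simp only [fr, decide_eq_false_iff_not, hw2]; split <;> [omega; (split <;> omega)]
      have q1 := huniq w1 (by simp only [hw1]; split <;> omega) e1 e2
      have q2 := huniq w2 (by simp only [hw2]; split <;> [omega; (split <;> omega)]) e3 e4
      simp only [hw1, hw2] at q1 q2
      split_ifs at q1 q2 <;> omega
    · set w1 := if a + d < 4*d+2 then a + d else a - (3*d+2) with hw1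
      set w2 := if a + d ≤ 4*d+2 then a + d - 1 else a - (3*d+3) with hw2
      have e1 : fr d a w1 = true := by
        simp only [fr, decide_eq_true_eq, hw1]; split <;> omega
      have e2 : fr d b w1 = false := by
        simp only [fr, decide_eq_false_iff_not, hw1]; split <;> omega
      have e3 : fr d a w2 = true := by
        simp only [fr, decide_eq_true_eq, hw2]; split <;> omega
      have e4 : fr d b w2 = false := by
        simp only [fr, decide_eq_false_iff_not, hw2]; split <;> omega
      have q1 := huniq w1 (by simp only [hw1]; split <;> omega) e1 e2
      have q2 := huniq w2 (by simp only [hw2]; split <;> omega) e3 e4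
      simp only [hw1, hw2] at q1 q2
      split_ifs at q1 q2 <;> omega
  · intro hAdj
    unfold Adj1 at hAdj
    have hcase : (b = a + 1 ∨ a = b + (4*d+1)) ∨ (a = b + 1 ∨ b = a + (4*d+1)) := by omega
    clear hAdj
    rcases hcase with hA | hB
    · refine ⟨by omega, by simp only [fr, decide_eq_true_eq]; omega,
        if d ≤ a then a - d else a + (3*d+2), by split <;> omega, ?_, ?_, ?_⟩
      · simp only [fr, decide_eq_true_eq]; split <;> omega
      · simp only [fr, decide_eq_false_iff_not]; split <;> omega
      · intro c' hc' g1 g2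
        simp only [fr, decide_eq_true_eq] at g1
        simp only [fr, decide_eq_false_iff_not] at g2
        split <;> omega
    · refine ⟨by omega, by simp only [fr, decide_eq_true_eq]; omega,
        if a + d < 4*d+2 then a + d else a - (3*d+2), by split <;> omega, ?_, ?_, ?_⟩
      · simp only [fr, decide_eq_true_eq]; split <;> omega
      · simp only [fr, decide_eq_false_iff_not]; split <;> omega
      · intro c' hc' g1 g2
        simp only [fr, decide_eq_true_eq] at g1
        simp only [fr, decide_eq_false_iff_not] at g2
        split <;> omega


lemma modm {d x : ℕ} (hx : x < 2*(4*d+2)) :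
    x % (4*d+2) = if x < 4*d+2 then x else x - (4*d+2) := by
  split
  · exact Nat.mod_eq_of_lt ‹_›
  · rw [Nat.mod_eq_sub_mod (by omega), Nat.mod_eq_of_lt (by omega)]

lemma rot {d : ℕ} (g : ℕ → ℕ)
    (hmap : ∀ a, a < 4*d+2 → g a < 4*d+2)
    (hinj : ∀ a b, a < 4*d+2 → b < 4*d+2 → g a = g b → a = b)
    (hadj : ∀ a, a + 1 < 4*d+2 → Adj1 d (g a) (g (a+1)))
    (h1 : g 1 = (g 0 + 1) % (4*d+2)) :
    ∀ a, a < 4*d+2 → g a = (g 0 + a) % (4*d+2) := by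
  intro a
  induction a using Nat.strong_induction_on with
  | _ a IH =>
    intro ha
    have hg0 := hmap 0 (by omega)
    match a, ha with
    | 0, ha => rw [modm (by omega), if_pos (show g 0 + 0 < 4*d+2 by omega)]; omega
    | 1, ha => rw [h1]
    | (k+2), ha =>
      set a := k + 2 with hak
      have r1 := IH (a-1) (by omega) (by omega)
      have r2 := IH (a-2) (by omega) (by omega)
      have adj : Adj1 d (g (a-1)) (g a) := by
        have := hadj (a-1) (by omega)
        rwa [show a-1+1 = a by omega] at this
      have hga := hmap a (by omega)
      have hga1 := hmap (a-1) (by omega)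
      have hga2 := hmap (a-2) (by omega)
      have hne : g a ≠ g (a-2) := fun h => by
        have := hinj a (a-2) (by omega) (by omega) h; omega
      rw [modm (by omega)] at r1 r2 ⊢
      unfold Adj1 at adj
      split_ifs at r1 r2 ⊢ <;> omega

def reflm (d x : ℕ) : ℕ := if x = 0 then 0 else (4*d+2) - x

lemma gdet {d : ℕ} (g : ℕ → ℕ)
    (hmap : ∀ a, a < 4*d+2 → g a < 4*d+2)
    (hinj : ∀ a b, a < 4*d+2 → b < 4*d+2 → g a = g b → a = b)
    (hadj : ∀ a, a + 1 < 4*d+2 → Adj1 d (g a) (g (a+1))) :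
    ∀ a, a < 4*d+2 → g a = if g 1 = (g 0 + 1) % (4*d+2) then (g 0 + a) % (4*d+2)
      else reflm d ((reflm d (g 0) + a) % (4*d+2)) := by
  by_cases hs : g 1 = (g 0 + 1) % (4*d+2)
  · intro a ha
    rw [if_pos hs]
    exact rot g hmap hinj hadj hs a ha
  · have hg0 := hmap 0 (by omega)
    have hmap' : ∀ a, a < 4*d+2 → reflm d (g a) < 4*d+2 := by
      intro a ha; have := hmap a ha; unfold reflm; split <;> omega
    have hinj' : ∀ a b, a < 4*d+2 → b < 4*d+2 → reflm d (g a) = reflm d (g b) → a = b := by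
      intro a b ha hb h
      apply hinj a b ha hb
      have h1 := hmap a ha; have h2 := hmap b hb
      unfold reflm at h; split_ifs at h <;> omega
    have hadj' : ∀ a, a + 1 < 4*d+2 → Adj1 d (reflm d (g a)) (reflm d (g (a+1))) := by
      intro a ha
      have h1 := hmap a (by omega); have h2 := hmap (a+1) ha
      have hA := hadj a ha
      unfold Adj1 at hA ⊢
      unfold reflm
      split_ifs <;> omega
    have h1' : reflm d (g 1) = (reflm d (g 0) + 1) % (4*d+2) := by
      have adj0 := hadj 0 (by omega)
      simp only [Nat.zero_add] at adj0
      have hg1 := hmap 1 (by omega)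
      have hr0 : reflm d (g 0) < 4*d+2 := by unfold reflm; split <;> omega
      rw [modm (by omega)] at hs
      rw [modm (by omega)]
      unfold Adj1 at adj0
      unfold reflm at hr0 ⊢
      split_ifs at hs hr0 ⊢ <;> omega
    have key := rot (fun x => reflm d (g x)) hmap' hinj' hadj' h1'
    intro a ha
    rw [if_neg hs]
    have := key a ha
    rw [← this]
    have hga := hmap a ha
    unfold reflm; split_ifs <;> omega

lemma cluster_bad {d a b : ℕ} (ha : a < 4*d+2) (hb : b < 4*d+2) :
    ((range (4*d+2)).filter fun c =>
      fr d a b = Bool.xor (fr d b c) (fr d a c)).card ≤ 2*d := by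
  cases h : fr d a b with
  | true =>
    have e : (range (4*d+2)).filter (fun c => (true : Bool) = (fr d b c ^^ fr d a c))
        = (range (4*d+2)).filter (fun c => fr d a c ≠ fr d b c) :=
      Finset.filter_congr (fun c _ => by
        cases h1 : fr d a c <;> cases h2 : fr d b c <;> simp)
    rw [e]
    exact sdiff_le ha hb h
  | false =>
    have e : (range (4*d+2)).filter (fun c => (false : Bool) = (fr d b c ^^ fr d a c))
        = (range (4*d+2)).filter (fun c => fr d (antip d a) c ≠ fr d b c) :=
      Finset.filter_congr (fun c hc => by
        rw [fr_antip ha (mem_range.1 hc)]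
        cases h1 : fr d a c <;> cases h2 : fr d b c <;> simp)
    rw [e]
    exact sdiff_le (antip_lt ha) hb (by rw [fr_antip ha hb, h]; rfl)

def cl {d : ℕ} (u : Fin (8*d+4)) : ℕ := u.val / 2

lemma cl_lt {d : ℕ} (u : Fin (8*d+4)) : cl u < 4*d+2 := by
  have := u.isLt; unfold cl; omega

def vtx (d c : ℕ) : Fin (8*d+4) :=
  ⟨2 * (c % (4*d+2)), by have := Nat.mod_lt c (show 0 < 4*d+2 by omega); omega⟩

lemma cl_vtx {d c : ℕ} (hc : c < 4*d+2) : cl (vtx d c) = c := by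
  unfold cl vtx; simp only; rw [Nat.mod_eq_of_lt hc]; omega

def G0 (d : ℕ) : SignedGraph (8*d+4) := fun u v => fr d (cl u) (cl v)

lemma rows_iff {d : ℕ} (u v : Fin (8*d+4)) :
    (∀ x, G0 d u x = G0 d v x) ↔ cl u = cl v := by
  constructor
  · intro h
    by_contra hne
    obtain ⟨c, hc, hfr⟩ := sep hne (cl_lt u) (cl_lt v)
    have := h (vtx d c)
    unfold G0 at this
    rw [cl_vtx hc] at this
    exact hfr this
  · intro h x; unfold G0; rw [h]

section Aut
variable {d : ℕ} (π : Equiv.Perm (Fin (8*d+4)))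

def Fp (c : ℕ) : ℕ := cl (π (vtx d c))
def bitb (c : ℕ) : ℕ := (π (vtx d c)).val % 2
def sgnb : Bool := decide (Fp π 1 = (Fp π 0 + 1) % (4*d+2))

variable (hπ : ∀ u v, G0 d (π u) (π v) = G0 d u v)
include hπ

lemma aut_cl : ∀ u v, cl u = cl v → cl (π u) = cl (π v) := by
  intro u v h
  apply (rows_iff _ _).mp
  intro y
  calc G0 d (π u) y = G0 d (π u) (π (π.symm y)) := by rw [Equiv.apply_symm_apply]
    _ = G0 d u (π.symm y) := hπ u (π.symm y)
    _ = G0 d v (π.symm y) := by unfold G0; rw [h]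
    _ = G0 d (π v) (π (π.symm y)) := (hπ v (π.symm y)).symm
    _ = G0 d (π v) y := by rw [Equiv.apply_symm_apply]

lemma aut_Fp : ∀ u, cl (π u) = Fp π (cl u) := by
  intro u
  exact aut_cl π hπ u (vtx d (cl u)) (cl_vtx (cl_lt u)).symm

omit hπ in
lemma Fp_lt : ∀ c, Fp π c < 4*d+2 := fun c => cl_lt _

lemma Fp_inj : ∀ a b, a < 4*d+2 → b < 4*d+2 → Fp π a = Fp π b → a = b := by
  intro a b ha hb h
  have hrow : ∀ x, G0 d (π (vtx d a)) x = G0 d (π (vtx d b)) x := (rows_iff _ _).mpr h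
  have hrow2 : ∀ x, G0 d (vtx d a) x = G0 d (vtx d b) x := by
    intro x
    calc G0 d (vtx d a) x = G0 d (π (vtx d a)) (π x) := (hπ _ x).symm
      _ = G0 d (π (vtx d b)) (π x) := hrow (π x)
      _ = G0 d (vtx d b) x := hπ _ x
  have := (rows_iff _ _).mp hrow2
  rwa [cl_vtx ha, cl_vtx hb] at this

lemma Fp_surj : ∀ y, y < 4*d+2 → ∃ c, c < 4*d+2 ∧ Fp π c = y := by
  intro y hy
  refine ⟨cl (π.symm (vtx d y)), cl_lt _, ?_⟩
  have := aut_Fp π hπ (π.symm (vtx d y))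
  rw [Equiv.apply_symm_apply, cl_vtx hy] at this
  exact this.symm

lemma Fp_fr : ∀ a b, a < 4*d+2 → b < 4*d+2 → fr d (Fp π a) (Fp π b) = fr d a b := by
  intro a b ha hb
  have h := hπ (vtx d a) (vtx d b)
  unfold G0 at h
  rwa [aut_Fp π hπ (vtx d a), aut_Fp π hπ (vtx d b), cl_vtx ha, cl_vtx hb] at h

lemma aut_adj (hd : 1 ≤ d) : ∀ a b, a < 4*d+2 → b < 4*d+2 → Adj1 d a b →
    Adj1 d (Fp π a) (Fp π b) := by
  intro a b ha hb hadj
  obtain ⟨hne, hfr, c, hcm, h1, h2, huniq⟩ := (Pchar hd ha hb).mpr hadj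
  apply (Pchar hd (Fp_lt π a) (Fp_lt π b)).mp
  refine ⟨fun h => hne (Fp_inj π hπ a b ha hb h),
    by rw [Fp_fr π hπ a b ha hb]; exact hfr,
    Fp π c, Fp_lt π c,
    by rw [Fp_fr π hπ a c ha hcm]; exact h1,
    by rw [Fp_fr π hπ b c hb hcm]; exact h2, ?_⟩
  intro c' hc' g1 g2
  obtain ⟨c₀, hc₀, rfl⟩ := Fp_surj π hπ c' hc'
  rw [Fp_fr π hπ a c₀ ha hc₀] at g1
  rw [Fp_fr π hπ b c₀ hb hc₀] at g2
  rw [huniq c₀ hc₀ g1 g2]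

lemma aut_det (hd : 1 ≤ d) : ∀ a, a < 4*d+2 →
    Fp π a = if Fp π 1 = (Fp π 0 + 1) % (4*d+2) then (Fp π 0 + a) % (4*d+2)
      else reflm d ((reflm d (Fp π 0) + a) % (4*d+2)) :=
  gdet (Fp π) (fun c _ => Fp_lt π c) (Fp_inj π hπ)
    (fun a ha => aut_adj π hπ hd a (a+1) (by omega) ha (Or.inl rfl))

lemma aut_val : ∀ u : Fin (8*d+4), (π u).val =
    2 * Fp π (cl u) + (if u.val % 2 = 0 then bitb π (cl u) else 1 - bitb π (cl u)) := by
  intro u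
  have hc : cl u < 4*d+2 := cl_lt u
  have h1 : (π u).val / 2 = Fp π (cl u) := aut_Fp π hπ u
  have g2 : (π (vtx d (cl u))).val / 2 = Fp π (cl u) := rfl
  have hcl : (vtx d (cl u)).val = 2 * cl u := by
    unfold vtx; simp only; rw [Nat.mod_eq_of_lt hc]
  have hu2 : u.val / 2 = cl u := rfl
  by_cases he : u.val % 2 = 0
  · have hu : u = vtx d (cl u) := Fin.ext (by rw [hcl]; omega)
    rw [if_pos he]
    unfold bitb
    rw [← hu]
    omega
  · have g3 : (π u).val ≠ (π (vtx d (cl u))).val := by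
      intro h
      have : u = vtx d (cl u) := π.injective (Fin.ext h)
      have := congrArg Fin.val this
      rw [hcl] at this
      omega
    rw [if_neg he]
    unfold bitb
    omega

end Aut

def Phi (d : ℕ) (σ : Equiv.Perm (Fin (8*d+4))) : SignedGraph (8*d+4) :=
  fun u v => G0 d (σ u) (σ v)
lemma aut_inj {d : ℕ} (hd : 1 ≤ d) (π π' : Equiv.Perm (Fin (8*d+4)))
    (hπ : ∀ u v, G0 d (π u) (π v) = G0 d u v)
    (hπ' : ∀ u v, G0 d (π' u) (π' v) = G0 d u v)
    (h1 : π (vtx d 0) = π' (vtx d 0))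
    (h2 : sgnb π = sgnb π')
    (h3 : ∀ i : ℕ, i < 4*d+1 → bitb π (i+1) = bitb π' (i+1)) :
    π = π' := by
  have hF0 : Fp π 0 = Fp π' 0 := by unfold Fp; rw [h1]
  have hF1 : Fp π 1 = Fp π' 1 → True := fun _ => trivial
  have hbit : ∀ c, c < 4*d+2 → bitb π c = bitb π' c := by
    intro c hc
    match c with
    | 0 => unfold bitb; rw [h1]
    | (i+1) => exact h3 i (by omega)
  have hs : (Fp π 1 = (Fp π 0 + 1) % (4*d+2)) ↔ (Fp π' 1 = (Fp π' 0 + 1) % (4*d+2)) := by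
    unfold sgnb at h2
    rw [decide_eq_decide] at h2
    exact h2
  have hF : ∀ a, a < 4*d+2 → Fp π a = Fp π' a := by
    intro a ha
    rw [aut_det π hπ hd a ha, aut_det π' hπ' hd a ha]
    by_cases hc : Fp π 1 = (Fp π 0 + 1) % (4*d+2)
    · rw [if_pos hc, if_pos (hs.mp hc), hF0]
    · rw [if_neg hc, if_neg (fun h => hc (hs.mpr h)), hF0]
  apply Equiv.ext
  intro u
  apply Fin.ext
  rw [aut_val π hπ u, aut_val π' hπ' u, hF _ (cl_lt u), hbit _ (cl_lt u)]

lemma fiber_le {d : ℕ} (c : ℕ) :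
    ((univ : Finset (Fin (8*d+4))).filter (fun w => cl w = c)).card ≤ 2 := by
  by_cases hc : c < 4*d+2
  · refine le_trans (Finset.card_le_card (?_ :
      _ ⊆ ({⟨2*c, by omega⟩, ⟨2*c+1, by omega⟩} : Finset (Fin (8*d+4))))) ?_
    · intro w hw
      simp only [mem_filter, mem_univ, true_and] at hw
      have hv := w.isLt
      simp only [mem_insert, mem_singleton]
      unfold cl at hw
      rcases Nat.lt_or_ge w.val (2*c+1) with h | h
      · left; exact Fin.ext (show w.val = 2*c by omega)
      · right; exact Fin.ext (show w.val = 2*c+1 by omega)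
    · exact le_trans (Finset.card_insert_le _ _) (by simp)
  · have : ((univ : Finset (Fin (8*d+4))).filter (fun w => cl w = c)) = ∅ := by
      apply Finset.filter_false_of_mem
      intro w _
      have := cl_lt w
      omega
    rw [this]; simp

lemma rank_le {d : ℕ} (u v : Fin (8*d+4)) : rank (G0 d) u v ≤ 4*d := by
  unfold rank
  have key : ∀ x y z : Bool, ¬(Bool.xor x (Bool.xor y z) = true) → x = (y ^^ z) := by decide
  have step1 : (univ.filter (fun w => w ≠ u ∧ w ≠ v ∧ ¬ BalancedTriad (G0 d) u v w)) ⊆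
      (univ.filter (fun w : Fin (8*d+4) =>
        fr d (cl u) (cl v) = (fr d (cl v) (cl w) ^^ fr d (cl u) (cl w)))) := by
    intro w hw
    simp only [mem_filter, mem_univ, true_and] at hw ⊢
    exact key _ _ _ hw.2.2
  refine le_trans (Finset.card_le_card step1) ?_
  set S₁ := (univ.filter (fun w : Fin (8*d+4) =>
        fr d (cl u) (cl v) = (fr d (cl v) (cl w) ^^ fr d (cl u) (cl w)))) with hS₁
  have step2 : S₁.card ≤ 2 * (S₁.image (fun w => (cl w : ℕ))).card := by
    apply Finset.card_le_mul_card_image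
    intro c _
    refine le_trans (Finset.card_le_card ?_) (fiber_le c)
    intro w hw
    simp only [mem_filter, mem_univ, true_and] at hw ⊢
    exact hw.2
  have step3 : (S₁.image (fun w => (cl w : ℕ))) ⊆
      ((range (4*d+2)).filter fun c =>
        fr d (cl u) (cl v) = Bool.xor (fr d (cl v) c) (fr d (cl u) c)) := by
    intro c hc
    simp only [mem_image] at hc
    obtain ⟨w, hw, rfl⟩ := hc
    simp only [hS₁, mem_filter, mem_univ, true_and] at hw
    simp only [mem_filter, mem_range]
    exact ⟨cl_lt w, hw⟩
  have := cluster_bad (d := d) (cl_lt u) (cl_lt v)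
  have h3 := Finset.card_le_card step3
  omega

lemma rank_perm {d : ℕ} (σ : Equiv.Perm (Fin (8*d+4))) (u v : Fin (8*d+4)) :
    rank (Phi d σ) u v = rank (G0 d) (σ u) (σ v) := by
  unfold rank
  apply Finset.card_bij' (fun w _ => σ w) (fun w _ => σ.symm w)
  · intro w hw
    simp only [mem_filter, mem_univ, true_and] at hw ⊢
    refine ⟨fun h => hw.1 (σ.injective h), fun h => hw.2.1 (σ.injective h), hw.2.2⟩
  · intro w hw
    simp only [mem_filter, mem_univ, true_and] at hw ⊢
    refine ⟨fun h => hw.1 (by rw [← h, Equiv.apply_symm_apply]),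
      fun h => hw.2.1 (by rw [← h, Equiv.apply_symm_apply]), ?_⟩
    have : BalancedTriad (Phi d σ) u v (σ.symm w) ↔
        BalancedTriad (G0 d) (σ u) (σ v) (σ (σ.symm w)) := Iff.rfl
    rw [this, Equiv.apply_symm_apply]
    exact hw.2.2
  · intro w _; exact σ.symm_apply_apply w
  · intro w _; exact σ.apply_symm_apply w

lemma phi_jammed {d : ℕ} (hd : 1 ≤ d) (σ : Equiv.Perm (Fin (8*d+4))) :
    Symm (Phi d σ) ∧ (∀ u, Phi d σ u u = true) ∧ IsJammed (Phi d σ) := by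
  refine ⟨?_, ?_, ?_, ?_⟩
  · intro u v
    show fr d (cl (σ u)) (cl (σ v)) = fr d (cl (σ v)) (cl (σ u))
    simp only [fr, decide_eq_decide]; omega
  · intro u
    show fr d (cl (σ u)) (cl (σ u)) = true
    simp only [fr, decide_eq_true_eq]; omega
  · -- not balanced
    intro hB
    have e0 : cl (vtx d 0) = 0 := cl_vtx (by omega)
    have e1 : cl (vtx d (d+1)) = d+1 := cl_vtx (by omega)
    have e2 : cl (vtx d (2*d+2)) = 2*d+2 := cl_vtx (by omega)
    have hne : ∀ (x y : ℕ), x ≠ y → x < 4*d+2 → y < 4*d+2 →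
        σ.symm (vtx d x) ≠ σ.symm (vtx d y) := by
      intro x y hxy hx hy h
      have := σ.symm.injective h
      have := congrArg (fun z => @cl d z) this
      simp only [cl_vtx hx, cl_vtx hy] at this
      exact hxy this
    have := hB (σ.symm (vtx d 0)) (σ.symm (vtx d (d+1))) (σ.symm (vtx d (2*d+2)))
      (hne 0 (d+1) (by omega) (by omega) (by omega))
      (hne (d+1) (2*d+2) (by omega) (by omega) (by omega))
      (hne 0 (2*d+2) (by omega) (by omega) (by omega))
    unfold BalancedTriad Phi G0 at this
    rw [Equiv.apply_symm_apply, Equiv.apply_symm_apply, Equiv.apply_symm_apply,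
      e0, e1, e2] at this
    have f1 : fr d 0 (d+1) = false := by
      simp only [fr, decide_eq_false_iff_not]; omega
    have f2 : fr d (d+1) (2*d+2) = false := by
      simp only [fr, decide_eq_false_iff_not]; omega
    have f3 : fr d 0 (2*d+2) = false := by
      simp only [fr, decide_eq_false_iff_not]; omega
    rw [f1, f2, f3] at this
    simp at this
  · intro u v _
    have h := rank_le (d := d) (σ u) (σ v)
    rw [← rank_perm σ u v] at h
    omega

end CJ

/-- For `d ≥ 1` and `n = 8d + 4`, there are at least `(n-1)! / 2^(n/2)`
jammed signed graphs on `n` labeled vertices. -/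
theorem counting_jammed (d : ℕ) (hd : 1 ≤ d) :
    ((Nat.factorial (8 * d + 3) : ℝ) / 2 ^ (4 * d + 2)) ≤
      (Nat.card {G : SignedGraph (8 * d + 4) //
        Symm G ∧ (∀ u, G u u = true) ∧ IsJammed G} : ℝ) := by

  classical
  set P : SignedGraph (8*d+4) → Prop :=
    fun G => Symm G ∧ (∀ u, G u u = true) ∧ IsJammed G with hP
  have hcard : Nat.card {G : SignedGraph (8*d+4) // P G} = (univ.filter P).card := by
    rw [Nat.card_eq_fintype_card, Fintype.card_subtype]
  set A := (univ : Finset (Equiv.Perm (Fin (8*d+4)))).image (CJ.Phi d) with hA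
  have hAsub : A ⊆ univ.filter P := by
    intro H hH
    obtain ⟨σ, -, rfl⟩ := mem_image.1 hH
    rw [mem_filter]
    exact ⟨mem_univ _, CJ.phi_jammed hd σ⟩
  have hfiber : ∀ H ∈ A,
      ((univ : Finset (Equiv.Perm (Fin (8*d+4)))).filter
        (fun σ => CJ.Phi d σ = H)).card ≤ (8*d+4) * 2^(4*d+2) := by
    intro H hH
    obtain ⟨τ, -, rfl⟩ := mem_image.1 hH
    have haut : ∀ σ : Equiv.Perm (Fin (8*d+4)), CJ.Phi d σ = CJ.Phi d τ →
        ∀ u v, CJ.G0 d ((σ * τ⁻¹) u) ((σ * τ⁻¹) v) = CJ.G0 d u v := by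
      intro σ hσ u v
      have h := congrFun (congrFun hσ (τ⁻¹ u)) (τ⁻¹ v)
      simpa [CJ.Phi, Equiv.Perm.mul_apply, Equiv.Perm.inv_def, Equiv.apply_symm_apply] using h
    have hcod : ((univ : Finset (Fin (8*d+4) × Bool × (Fin (4*d+1) → Bool)))).card
        = (8*d+4) * 2^(4*d+2) := by
      simp only [Finset.card_univ, Fintype.card_prod, Fintype.card_bool, Fintype.card_fun,
        Fintype.card_fin]
      rw [show 4*d+2 = (4*d+1)+1 from rfl, pow_succ]
      ring
    refine le_trans (Finset.card_le_card_of_injOn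
      (f := fun σ => (((σ * τ⁻¹) (CJ.vtx d 0) : Fin (8*d+4)),
        (CJ.sgnb (σ * τ⁻¹) : Bool),
        (fun i : Fin (4*d+1) => decide (CJ.bitb (σ * τ⁻¹) (i.val+1) = 1))))
      (fun _ _ => mem_univ _) ?_) (le_of_eq hcod)
    intro σ1 h1 σ2 h2 heq
    rw [Finset.mem_coe, mem_filter] at h1 h2
    have hπ1 := haut σ1 h1.2
    have hπ2 := haut σ2 h2.2
    have e1 := congrArg Prod.fst heq
    have e2 := congrArg (fun p => p.2.1) heq
    have e3 := congrArg (fun p => p.2.2) heq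
    simp only at e1 e2 e3
    have h3 : ∀ i : ℕ, i < 4*d+1 →
        CJ.bitb (σ1 * τ⁻¹) (i+1) = CJ.bitb (σ2 * τ⁻¹) (i+1) := by
      intro i hi
      have := congrFun e3 ⟨i, hi⟩
      simp only [decide_eq_decide] at this
      unfold CJ.bitb at this ⊢
      omega
    have := CJ.aut_inj hd (σ1 * τ⁻¹) (σ2 * τ⁻¹) hπ1 hπ2 e1 e2 h3
    exact mul_right_cancel this
  have hsum : (univ : Finset (Equiv.Perm (Fin (8*d+4)))).card =
      ∑ H ∈ A, ((univ : Finset (Equiv.Perm (Fin (8*d+4)))).filter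
        (fun σ => CJ.Phi d σ = H)).card :=
    Finset.card_eq_sum_card_fiberwise (fun σ _ => mem_image_of_mem _ (mem_univ σ))
  have hle : Nat.factorial (8*d+4) ≤ A.card * ((8*d+4) * 2^(4*d+2)) := by
    calc Nat.factorial (8*d+4)
        = (univ : Finset (Equiv.Perm (Fin (8*d+4)))).card := by
          rw [Finset.card_univ, Fintype.card_perm, Fintype.card_fin]
      _ = ∑ H ∈ A, ((univ : Finset (Equiv.Perm (Fin (8*d+4)))).filter
            (fun σ => CJ.Phi d σ = H)).card := hsum
      _ ≤ ∑ _H ∈ A, (8*d+4) * 2^(4*d+2) := Finset.sum_le_sum hfiber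
      _ = A.card * ((8*d+4) * 2^(4*d+2)) := by
          rw [Finset.sum_const, smul_eq_mul]
  have hcount : Nat.factorial (8*d+3) ≤ (univ.filter P).card * 2^(4*d+2) := by
    have h1 : A.card ≤ (univ.filter P).card := Finset.card_le_card hAsub
    have h2 : Nat.factorial (8*d+4) = (8*d+4) * Nat.factorial (8*d+3) := by
      rw [show (8*d+4) = (8*d+3)+1 from rfl, Nat.factorial_succ]
    have h3 : (8*d+4) * Nat.factorial (8*d+3) ≤
        (8*d+4) * ((univ.filter P).card * 2^(4*d+2)) := by
      calc (8*d+4) * Nat.factorial (8*d+3) = Nat.factorial (8*d+4) := h2.symm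
        _ ≤ A.card * ((8*d+4) * 2^(4*d+2)) := hle
        _ ≤ (univ.filter P).card * ((8*d+4) * 2^(4*d+2)) :=
            Nat.mul_le_mul_right _ h1
        _ = (8*d+4) * ((univ.filter P).card * 2^(4*d+2)) := by ring
    exact Nat.le_of_mul_le_mul_left h3 (by omega)
  rw [hcard, div_le_iff₀ (by positivity)]
  exact_mod_cast hcount
end

section
/- There exists a constant c > 0 such that for all sufficiently large n with n ≡ 4 (mod 8), the number of jammed signed graphs on the labeled vertex set {1, …, n} is at least 2^{c · n · log₂ n}. -/
open Finset

section JammedCounting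

open Finset Nat

private lemma fin_sub_val' {m : ℕ} (x y : Fin m) :
    (x - y).val = if y.val ≤ x.val then x.val - y.val else x.val + (m - y.val) := by
  have hx := x.isLt; have hy := y.isLt
  have hs : (x - y).val = ((m - y.val) + x.val) % m := rfl
  rw [hs]
  split_ifs with h
  · rw [Nat.mod_eq_sub_mod (by omega), Nat.mod_eq_of_lt (by omega)]; omega
  · rw [Nat.mod_eq_of_lt (by omega)]; omega

private lemma fin_add_val' {m : ℕ} (x y : Fin m) :
    (x + y).val = if x.val + y.val < m then x.val + y.val else x.val + y.val - m := by
  have hx := x.isLt; have hy := y.isLt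
  have hs : (x + y).val = (x.val + y.val) % m := rfl
  rw [hs]
  split_ifs with h
  · exact Nat.mod_eq_of_lt h
  · rw [Nat.mod_eq_sub_mod (by omega), Nat.mod_eq_of_lt (by omega)]

private lemma circDist_eq' {m : ℕ} (x y : Fin m) :
    circDist x y = min ((x.val - y.val) + (y.val - x.val))
      (m - ((x.val - y.val) + (y.val - x.val))) := by
  have hx := x.isLt; have hy := y.isLt
  unfold circDist
  rw [fin_sub_val', fin_sub_val']
  split_ifs <;> omega

private lemma fin_add_sub_val' {m : ℕ} (x t : Fin m) : ((x + t) - t).val = x.val := by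
  have hx := x.isLt; have ht := t.isLt
  rw [fin_sub_val', fin_add_val']
  split_ifs <;> omega

private lemma fin_sub_add_val' {m : ℕ} (x t : Fin m) : ((x - t) + t).val = x.val := by
  have hx := x.isLt; have ht := t.isLt
  rw [fin_add_val', fin_sub_val']
  split_ifs <;> omega

/-- imbalance predicate, at the level of natural-number cluster positions. -/
private def ImbPred (k v x m : ℕ) : Prop :=
  ¬ ((min v (m - v) ≤ k) ↔
     ((min ((x - v) + (v - x)) (m - ((x - v) + (v - x))) ≤ k) ↔
      (min x (m - x) ≤ k)))

private instance (k v x m : ℕ) : Decidable (ImbPred k v x m) := by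
  unfold ImbPred; infer_instance

private lemma card_filter_le_interval (m : ℕ) (P : ℕ → Prop) [DecidablePred P]
    (a₁ b₁ a₂ b₂ : ℕ)
    (h : ∀ x < m, P x → (a₁ ≤ x ∧ x ≤ b₁) ∨ (a₂ ≤ x ∧ x ≤ b₂)) :
    ((univ : Finset (Fin m)).filter (fun l => P l.val)).card ≤ (b₁+1-a₁) + (b₂+1-a₂) := by
  have h1 : ((univ : Finset (Fin m)).filter (fun l => P l.val)).card
      ≤ ((Finset.Icc a₁ b₁) ∪ (Finset.Icc a₂ b₂)).card := by
    apply Finset.card_le_card_of_injOn Fin.val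
    · intro l hl
      simp only [Finset.mem_coe, mem_filter, mem_univ, true_and] at hl
      have := h l.val l.isLt hl
      simp only [Finset.mem_coe, Finset.mem_union, Finset.mem_Icc]
      omega
    · exact Function.Injective.injOn Fin.val_injective
  refine h1.trans ((Finset.card_union_le _ _).trans ?_)
  rw [Nat.card_Icc, Nat.card_Icc]

private lemma core_bound (k v : ℕ) (hv : v < 4*k+2) :
    ((univ : Finset (Fin (4*k+2))).filter (fun l => ImbPred k v l.val (4*k+2))).card
      ≤ 2*k := by
  rcases le_or_gt v k with hA | h1
  · refine le_trans (card_filter_le_interval (4*k+2) (fun x => ImbPred k v x (4*k+2))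
      (k+1) (k+v) (3*k+2) (3*k+1+v) ?_) (by omega)
    intro x hx h; unfold ImbPred at h; omega
  rcases le_or_gt v (2*k) with hB | h2
  · refine le_trans (card_filter_le_interval (4*k+2) (fun x => ImbPred k v x (4*k+2))
      (v-k) k (v+k+1) (3*k+1) ?_) (by omega)
    intro x hx h; unfold ImbPred at h; omega
  rcases le_or_gt v (3*k+1) with hC | h3
  · refine le_trans (card_filter_le_interval (4*k+2) (fun x => ImbPred k v x (4*k+2))
      (k+1) (v-k-1) (3*k+2) (v+k) ?_) (by omega)
    intro x hx h; unfold ImbPred at h; omega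
  · refine le_trans (card_filter_le_interval (4*k+2) (fun x => ImbPred k v x (4*k+2))
      (v-3*k-1) k (v-k) (3*k+1) ?_) (by omega)
    intro x hx h; unfold ImbPred at h; omega

private lemma imb_iff {k : ℕ} (i j l : Fin (4*k+2)) :
    (¬ ((circDist i j ≤ k) ↔ ((circDist j l ≤ k) ↔ (circDist i l ≤ k))))
      ↔ ImbPred k (j - i).val (l - i).val (4*k+2) := by
  have s1 := fin_sub_val' j i
  have s2 := fin_sub_val' l i
  have hi := i.isLt; have hj := j.isLt; have hl := l.isLt
  have e1 : (circDist i j ≤ k) ↔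
      (min (j - i).val (4*k+2 - (j - i).val) ≤ k) := by
    rw [circDist_eq' i j]
    split_ifs at s1 <;> omega
  have e2 : (circDist j l ≤ k) ↔
      (min (((l - i).val - (j - i).val) + ((j - i).val - (l - i).val))
        (4*k+2 - (((l - i).val - (j - i).val) + ((j - i).val - (l - i).val))) ≤ k) := by
    rw [circDist_eq' j l]
    split_ifs at s1 s2 <;> omega
  have e3 : (circDist i l ≤ k) ↔
      (min (l - i).val (4*k+2 - (l - i).val) ≤ k) := by
    rw [circDist_eq' i l]
    split_ifs at s2 <;> omega
  unfold ImbPred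
  rw [e1, e2, e3]

private lemma T_bound {k : ℕ} (i j : Fin (4*k+2)) :
    ((univ : Finset (Fin (4*k+2))).filter
      (fun l => ¬ ((circDist i j ≤ k) ↔
        ((circDist j l ≤ k) ↔ (circDist i l ≤ k))))).card ≤ 2*k := by
  have hcard : ((univ : Finset (Fin (4*k+2))).filter
      (fun l => ¬ ((circDist i j ≤ k) ↔
        ((circDist j l ≤ k) ↔ (circDist i l ≤ k))))).card
      = ((univ : Finset (Fin (4*k+2))).filter
          (fun l => ImbPred k (j - i).val l.val (4*k+2))).card := by
    apply Finset.card_nbij' (fun l => l - i) (fun l => l + i)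
    · intro a ha
      simp only [Finset.mem_coe, mem_filter, mem_univ, true_and] at *
      exact (imb_iff i j a).mp ha
    · intro a ha
      simp only [Finset.mem_coe, mem_filter, mem_univ, true_and] at *
      have := (imb_iff i j (a + i))
      rw [fin_add_sub_val'] at this
      exact this.mpr ha
    · intro a _; exact Fin.ext (fin_sub_add_val' a i)
    · intro a _; exact Fin.ext (fin_add_sub_val' a i)
  rw [hcard]
  exact core_bound k (j - i).val (j - i).isLt

/-- The cluster assignment determined by a permutation. -/
private def ca (k : ℕ) (σ : Equiv.Perm (Fin (4*k+2))) (v : Fin (8*k+4)) : Fin (4*k+2) :=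
  if h : v.val < 4*k+2 then ⟨v.val, h⟩
  else σ ⟨v.val - (4*k+2), by have := v.isLt; omega⟩

private def Gσ (k : ℕ) (σ : Equiv.Perm (Fin (4*k+2))) : SignedGraph (8*k+4) :=
  circular (ca k σ) k

private lemma bal_iff {n m k : ℕ} (c : Fin n → Fin m) (u v w : Fin n) :
    BalancedTriad (circular c k) u v w ↔
      ((circDist (c u) (c v) ≤ k) ↔
        ((circDist (c v) (c w) ≤ k) ↔ (circDist (c u) (c w) ≤ k))) := by
  unfold BalancedTriad circular
  by_cases h1 : circDist (c u) (c v) ≤ k <;>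
  by_cases h2 : circDist (c v) (c w) ≤ k <;>
  by_cases h3 : circDist (c u) (c w) ≤ k <;>
  simp [h1, h2, h3]

private lemma fiber_le (k : ℕ) (σ : Equiv.Perm (Fin (4*k+2))) (l : Fin (4*k+2))
    (s : Finset (Fin (8*k+4))) :
    (s.filter (fun w => ca k σ w = l)).card ≤ 2 := by
  have hsub : s.filter (fun w => ca k σ w = l) ⊆
      {(⟨l.val, by have := l.isLt; omega⟩ : Fin (8*k+4)),
       ⟨4*k+2 + (σ.symm l).val, by have := (σ.symm l).isLt; omega⟩} := by
    intro w hw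
    have hw' := (mem_filter.mp hw).2
    simp only [Finset.mem_insert, Finset.mem_singleton]
    unfold ca at hw'
    split at hw'
    case isTrue h =>
      left
      have : w.val = l.val := by
        have := congrArg Fin.val hw'; simpa using this
      exact Fin.ext (by simpa using this)
    case isFalse h =>
      right
      have h2 : (⟨w.val - (4*k+2), by have := w.isLt; omega⟩ : Fin (4*k+2)) = σ.symm l := by
        rw [← hw', Equiv.symm_apply_apply]
      have h3 : w.val - (4*k+2) = (σ.symm l).val := by
        have := congrArg Fin.val h2; simpa using this
      exact Fin.ext (by simp only [Fin.val_mk]; omega)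
  refine (Finset.card_le_card hsub).trans ?_
  refine (Finset.card_insert_le _ _).trans ?_
  simp

private lemma jamRank_le (k : ℕ) (σ : Equiv.Perm (Fin (4*k+2))) (u v : Fin (8*k+4)) :
    rank (Gσ k σ) u v ≤ 4*k := by
  classical
  unfold rank
  have h1 : ((univ : Finset (Fin (8*k+4))).filter
        (fun w => w ≠ u ∧ w ≠ v ∧ ¬ BalancedTriad (Gσ k σ) u v w)).card
      ≤ ((univ : Finset (Fin (8*k+4))).filter
        (fun w => ¬ ((circDist (ca k σ u) (ca k σ v) ≤ k) ↔
          ((circDist (ca k σ v) (ca k σ w) ≤ k) ↔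
            (circDist (ca k σ u) (ca k σ w) ≤ k))))).card := by
    apply Finset.card_le_card
    intro w hw
    simp only [mem_filter, mem_univ, true_and] at *
    exact fun hbal => hw.2.2 ((bal_iff (ca k σ) u v w).mpr hbal)
  have key : ∀ (A : Finset (Fin (8*k+4))) (B : Finset (Fin (4*k+2))),
      (∀ w ∈ A, ca k σ w ∈ B) → B.card ≤ 2*k → A.card ≤ 4*k := by
    intro A B hmap hB
    have h2 : A.card = ∑ l ∈ B, (A.filter (fun w => ca k σ w = l)).card :=
      Finset.card_eq_sum_card_fiberwise hmap
    have h3 : ∑ l ∈ B, (A.filter (fun w => ca k σ w = l)).card ≤ ∑ _l ∈ B, 2 :=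
      Finset.sum_le_sum (fun l _ => fiber_le k σ l A)
    rw [Finset.sum_const, smul_eq_mul] at h3
    omega
  refine h1.trans (key _ _ ?_ (T_bound (ca k σ u) (ca k σ v)))
  intro w hw
  simp only [mem_filter, mem_univ, true_and] at *
  exact hw

private lemma ca_small (k : ℕ) (σ : Equiv.Perm (Fin (4*k+2))) (x : ℕ)
    (h8 : x < 8*k+4) (h4 : x < 4*k+2) :
    ca k σ ⟨x, h8⟩ = ⟨x, h4⟩ := dif_pos h4

private lemma G_not_balanced (k : ℕ) (hk : 1 ≤ k) (σ : Equiv.Perm (Fin (4*k+2))) :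
    ¬ IsBalanced (Gσ k σ) := by
  intro hbal
  have h := hbal ⟨0, by omega⟩ ⟨k+1, by omega⟩ ⟨2*k+2, by omega⟩
    (by simp only [ne_eq, Fin.mk.injEq]; omega) (by simp only [ne_eq, Fin.mk.injEq]; omega)
    (by simp only [ne_eq, Fin.mk.injEq]; omega)
  unfold Gσ at h
  rw [bal_iff] at h
  rw [ca_small k σ 0 (by omega) (by omega), ca_small k σ (k+1) (by omega) (by omega),
    ca_small k σ (2*k+2) (by omega) (by omega)] at h
  rw [circDist_eq', circDist_eq', circDist_eq'] at h
  simp only [Fin.val_mk] at h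
  omega

private lemma G_jammed (k : ℕ) (hk : 1 ≤ k) (σ : Equiv.Perm (Fin (4*k+2))) :
    IsJammed (Gσ k σ) := by
  refine ⟨G_not_balanced k hk σ, fun u v _ => ?_⟩
  have := jamRank_le k σ u v
  omega

private lemma G_symm (k : ℕ) (σ : Equiv.Perm (Fin (4*k+2))) : Symm (Gσ k σ) := by
  intro u v
  unfold Gσ circular
  have : circDist (ca k σ u) (ca k σ v) = circDist (ca k σ v) (ca k σ u) := by
    rw [circDist_eq', circDist_eq']; omega
  rw [this]

private lemma G_diag (k : ℕ) (σ : Equiv.Perm (Fin (4*k+2))) (u : Fin (8*k+4)) :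
    Gσ k σ u u = true := by
  unfold Gσ circular
  rw [decide_eq_true_iff, circDist_eq']
  omega

private lemma arc_step {k : ℕ} (a b : Fin (4*k+2))
    (h : ∀ i : Fin (4*k+2), circDist b i ≤ k → circDist a i ≤ k)
    (hd : (a.val < b.val ∧ b.val - a.val ≤ k) ∨ (b.val < a.val ∧ 3*k+2 ≤ a.val - b.val)) :
    False := by
  have ha := a.isLt; have hb := b.isLt
  rcases Nat.lt_or_ge (b.val + k) (4*k+2) with hw | hw
  · have h1 := h ⟨b.val + k, by omega⟩ (by rw [circDist_eq']; simp only [Fin.val_mk]; omega)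
    rw [circDist_eq'] at h1
    simp only [Fin.val_mk] at h1
    omega
  · have h1 := h ⟨b.val + k - (4*k+2), by omega⟩ (by rw [circDist_eq']; simp only [Fin.val_mk]; omega)
    rw [circDist_eq'] at h1
    simp only [Fin.val_mk] at h1
    omega

private lemma arc_eq {k : ℕ} (a b : Fin (4*k+2))
    (h : ∀ i : Fin (4*k+2), circDist a i ≤ k ↔ circDist b i ≤ k) : a = b := by
  have hab : circDist a b ≤ k := (h b).mpr (by rw [circDist_eq']; omega)
  by_contra hne
  have hv : a.val ≠ b.val := fun hh => hne (Fin.ext hh)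
  rw [circDist_eq'] at hab
  have ha := a.isLt; have hb := b.isLt
  rcases (by omega : ((a.val < b.val ∧ b.val - a.val ≤ k) ∨ (b.val < a.val ∧ 3*k+2 ≤ a.val - b.val))
      ∨ ((b.val < a.val ∧ a.val - b.val ≤ k) ∨ (a.val < b.val ∧ 3*k+2 ≤ b.val - a.val))) with hc | hc
  · exact arc_step a b (fun i => (h i).mpr) hc
  · exact arc_step b a (fun i => (h i).mp) hc

private lemma G_inj (k : ℕ) : Function.Injective (Gσ k) := by
  intro σ τ h
  apply Equiv.ext
  intro t
  apply arc_eq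
  intro i
  have h1 := congrFun (congrFun h ⟨4*k+2 + t.val, by have := t.isLt; omega⟩)
    ⟨i.val, by have := i.isLt; omega⟩
  unfold Gσ circular at h1
  have hca : ∀ ρ : Equiv.Perm (Fin (4*k+2)),
      ca k ρ ⟨4*k+2 + t.val, by have := t.isLt; omega⟩ = ρ t := by
    intro ρ
    unfold ca
    rw [dif_neg (by simp only [Fin.val_mk]; omega)]
    congr 1
    exact Fin.ext (by simp only [Fin.val_mk]; omega)
  rw [hca σ, hca τ, ca_small k σ i.val (by have := i.isLt; omega) i.isLt,
    ca_small k τ i.val (by have := i.isLt; omega) i.isLt] at h1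
  have h2 := decide_eq_decide.mp h1
  simpa using h2

private lemma pow_le_fact (a : ℕ) : ∀ b : ℕ, (a+1)^b * a ! ≤ (a+b)!
  | 0 => by simp
  | (b+1) => by
      have ih := pow_le_fact a b
      calc (a+1)^(b+1) * a ! = (a+1) * ((a+1)^b * a !) := by ring
        _ ≤ (a+b+1) * (a+b)! := Nat.mul_le_mul (by omega) ih
        _ = (a+(b+1))! := by
            rw [show a+(b+1) = (a+b)+1 by omega, Nat.factorial_succ]
  termination_by b => b

private lemma count_ge (k : ℕ) (hk : 1 ≤ k) :
    (4*k+2)! ≤ Nat.card {G : SignedGraph (8*k+4) //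
      Symm G ∧ (∀ u, G u u = true) ∧ IsJammed G} := by
  have hinj : Function.Injective (fun σ : Equiv.Perm (Fin (4*k+2)) =>
      (⟨Gσ k σ, G_symm k σ, G_diag k σ, G_jammed k hk σ⟩ :
        {G : SignedGraph (8*k+4) // Symm G ∧ (∀ u, G u u = true) ∧ IsJammed G})) := by
    intro σ τ hh
    exact G_inj k (congrArg Subtype.val hh)
  calc (4*k+2)! = Nat.card (Equiv.Perm (Fin (4*k+2))) := by
        rw [Nat.card_eq_fintype_card, Fintype.card_perm, Fintype.card_fin]
    _ ≤ _ := Nat.card_le_card_of_injective _ hinj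

end JammedCounting

/-- There are at least `2^(c n log₂ n)` jammed states for large `n ≡ 4 (mod 8)`. -/
theorem counting_jammed_superexp :
    ∃ c : ℝ, 0 < c ∧ ∃ N : ℕ, ∀ n : ℕ, N ≤ n → n % 8 = 4 →
      (2 : ℝ) ^ (c * n * Real.logb 2 n) ≤
        (Nat.card {G : SignedGraph n //
          Symm G ∧ (∀ u, G u u = true) ∧ IsJammed G} : ℝ) := by
  classical
  refine ⟨1/8, by norm_num, 32, fun n hn hmod => ?_⟩
  obtain ⟨k, rfl⟩ : ∃ k, n = 8*k+4 := ⟨(n-4)/8, by omega⟩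
  have hk : 1 ≤ k := by omega
  have hcard : ((2*k+2)^(2*k+1) : ℕ) ≤
      Nat.card {G : SignedGraph (8*k+4) //
        Symm G ∧ (∀ u, G u u = true) ∧ IsJammed G} := by
    refine le_trans ?_ (count_ge k hk)
    calc (2*k+2)^(2*k+1) = ((2*k+1)+1)^(2*k+1) := by rw [show 2*k+2 = 2*k+1+1 from by omega]
      _ ≤ ((2*k+1)+1)^(2*k+1) * Nat.factorial (2*k+1) :=
          Nat.le_mul_of_pos_right _ (Nat.factorial_pos _)
      _ ≤ Nat.factorial ((2*k+1)+(2*k+1)) := pow_le_fact (2*k+1) (2*k+1)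
      _ = Nat.factorial (4*k+2) := by rw [show (2*k+1)+(2*k+1) = 4*k+2 by omega]
  have hn0 : (0:ℝ) < ((8*k+4 : ℕ) : ℝ) := by positivity
  have key : (2:ℝ) ^ ((1/8 : ℝ) * ((8*k+4 : ℕ) : ℝ) * Real.logb 2 ((8*k+4 : ℕ) : ℝ))
      ≤ (((2*k+2)^(2*k+1) : ℕ) : ℝ) := by
    have e1 : (1/8 : ℝ) * ((8*k+4 : ℕ) : ℝ) * Real.logb 2 ((8*k+4 : ℕ) : ℝ)
        = Real.logb 2 ((8*k+4 : ℕ) : ℝ) * ((1/2 : ℝ) * ((2*k+1 : ℕ) : ℝ)) := by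
      push_cast; ring
    rw [e1, Real.rpow_mul (by norm_num),
      Real.rpow_logb (by norm_num) (by norm_num) hn0,
      Real.rpow_mul (le_of_lt hn0), Real.rpow_natCast]
    have hbase : ((8*k+4 : ℕ) : ℝ) ^ ((1:ℝ)/2) ≤ ((2*k+2 : ℕ) : ℝ) := by
      rw [← Real.sqrt_eq_rpow]
      have h2 : ((8*k+4 : ℕ) : ℝ) ≤ (((2*k+2 : ℕ) : ℝ))^2 := by
        push_cast; nlinarith [sq_nonneg ((k:ℝ))]
      calc Real.sqrt ((8*k+4 : ℕ) : ℝ) ≤ Real.sqrt ((((2*k+2 : ℕ) : ℝ))^2) :=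
            Real.sqrt_le_sqrt h2
        _ = ((2*k+2 : ℕ) : ℝ) := Real.sqrt_sq (by positivity)
    calc (((8*k+4 : ℕ) : ℝ) ^ ((1:ℝ)/2)) ^ (2*k+1)
        ≤ (((2*k+2 : ℕ) : ℝ)) ^ (2*k+1) := by
          apply pow_le_pow_left₀ (by positivity) hbase
      _ = (((2*k+2)^(2*k+1) : ℕ) : ℝ) := by push_cast; ring
  exact key.trans (by exact_mod_cast hcard)
end

section
/- For every integer n ≥ 11 and every partition of n vertices into three clusters whose sizes pairwise differ by at most 1, the signed graph in which edges inside a cluster are friendships and edges between different clusters are enmities is jammed. -/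
open Finset

/-- For `n ≥ 11`, three clusters whose sizes pairwise differ by at most one,
with friendships inside clusters and enmities across, form a jammed state. -/
theorem three_clusters_jammed (n : ℕ) (hn : 11 ≤ n) (c : Fin n → Fin 3)
    (hbal : ∀ i j : Fin 3,
      (univ.filter (fun u => c u = i)).card ≤ (univ.filter (fun u => c u = j)).card + 1) :
    IsJammed (fun u v => decide (c u = c v)) := by
  set G : SignedGraph n := fun u v => decide (c u = c v) with hG
  have hsum : ∑ i : Fin 3, (univ.filter (fun u => c u = i)).card = n := by
    rw [← Finset.card_eq_sum_card_fiberwise (fun x _ => Finset.mem_univ (c x))]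
    simp
  rw [Fin.sum_univ_three] at hsum
  have h01 := hbal 0 1
  have h02 := hbal 0 2
  have h10 := hbal 1 0
  have h12 := hbal 1 2
  have h20 := hbal 2 0
  have h21 := hbal 2 1
  have hpos0 : 0 < (univ.filter (fun u => c u = (0 : Fin 3))).card := by omega
  have hpos1 : 0 < (univ.filter (fun u => c u = (1 : Fin 3))).card := by omega
  have hpos2 : 0 < (univ.filter (fun u => c u = (2 : Fin 3))).card := by omega
  have bal_iff : ∀ u v w : Fin n, c u ≠ c v →
      (BalancedTriad G u v w ↔ (c w = c u ∨ c w = c v)) := by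
    intro u v w huv
    by_cases h1 : c w = c u <;> by_cases h2 : c w = c v
    · exact absurd (h1.symm.trans h2) huv
    · simp [BalancedTriad, hG, h1, h2, huv, Ne.symm huv]
    · simp [BalancedTriad, hG, h1, h2, huv, Ne.symm huv]
    · simp [BalancedTriad, hG, h1, h2, huv, Ne.symm h1, Ne.symm h2]
  obtain ⟨u0, hu0⟩ := Finset.card_pos.mp hpos0
  obtain ⟨u1, hu1⟩ := Finset.card_pos.mp hpos1
  obtain ⟨u2, hu2⟩ := Finset.card_pos.mp hpos2
  simp only [mem_filter, mem_univ, true_and] at hu0 hu1 hu2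
  constructor
  · intro hB
    have hne01 : c u0 ≠ c u1 := by rw [hu0, hu1]; decide
    have hbt := hB u0 u1 u2 (fun h => hne01 (h ▸ rfl))
      (fun h => (by rw [hu1, hu2]; decide : c u1 ≠ c u2) (h ▸ rfl))
      (fun h => (by rw [hu0, hu2]; decide : c u0 ≠ c u2) (h ▸ rfl))
    rw [bal_iff _ _ _ hne01, hu0, hu1, hu2] at hbt
    revert hbt; decide
  · intro u v huv
    by_cases hcv : c u = c v
    · have hr : rank G u v = 0 := by
        rw [rank, Finset.card_eq_zero, Finset.filter_eq_empty_iff]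
        intro w _
        simp [BalancedTriad, hG, hcv]
      omega
    · have hthird : ∀ a b : Fin 3, a ≠ b → ∃ k : Fin 3, k ≠ a ∧ k ≠ b ∧
          ∀ x : Fin 3, x ≠ a → x ≠ b → x = k := by decide
      obtain ⟨k, hk1, hk2, hk3⟩ := hthird (c u) (c v) hcv
      have hr : rank G u v = (univ.filter (fun w => c w = k)).card := by
        rw [rank]
        congr 1
        ext w
        simp only [mem_filter, mem_univ, true_and]
        constructor
        · rintro ⟨-, -, hb⟩
          rw [bal_iff _ _ _ hcv] at hb
          push_neg at hb
          exact hk3 _ hb.1 hb.2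
        · intro hw
          refine ⟨fun h => hk1 (hw ▸ h ▸ rfl), fun h => hk2 (hw ▸ h ▸ rfl), ?_⟩
          rw [bal_iff _ _ _ hcv, hw]
          push_neg
          exact ⟨hk1, hk2⟩
      rw [hr]
      rcases (by decide : ∀ a : Fin 3, a = 0 ∨ a = 1 ∨ a = 2) k with rfl | rfl | rfl <;>
        omega
end

section
/- Let n ≥ 12 be divisible by 3 and let G be a signed graph on n vertices in which every vertex is incident to at most n/12 − 1 friendship edges. Then there exists a finite sequence of CTD-admissible flips that transforms G into the jammed state J_n. -/
open Finset

namespace CTDProof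

variable {n : ℕ}

lemma flipSeq_trans {Adm : SignedGraph n → Sym2 (Fin n) → Prop} {G H K : SignedGraph n}
    {L L' : List (Sym2 (Fin n))} (h1 : FlipSeq Adm G L H) (h2 : FlipSeq Adm H L' K) :
    FlipSeq Adm G (L ++ L') K := by
  induction h1 with
  | nil G => simpa using h2
  | cons p hp _ ih => exact FlipSeq.cons p hp (ih h2)

lemma flip_perturb (G : SignedGraph n) (F : Finset (Sym2 (Fin n))) (p : Sym2 (Fin n))
    (hp : p ∉ F) : flipEdge (perturb G F) p = perturb G (insert p F) := by
  funext x y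
  simp only [flipEdge, perturb, Finset.mem_insert]
  by_cases h : s(x, y) = p
  · simp [h, hp]
  · simp [h]

lemma notbal_iff_false {H : SignedGraph n} {u v w : Fin n} (h : H u v = false) :
    (¬ BalancedTriad H u v w) ↔ H v w = H u w := by
  unfold BalancedTriad
  rw [h]
  cases hvw : H v w <;> cases huw : H u w <;> simp

lemma notbal_iff_true {H : SignedGraph n} {u v w : Fin n} (h : H u v = true) :
    (¬ BalancedTriad H u v w) ↔ ¬ (H v w = H u w) := by
  unfold BalancedTriad
  rw [h]
  cases hvw : H v w <;> cases huw : H u w <;> simp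

/-- colex key of an unordered pair -/
def keyF (n : ℕ) : Sym2 (Fin n) → ℕ :=
  Sym2.lift ⟨fun a b => max a.val b.val * n + min a.val b.val,
    fun a b => by simp [sup_comm, inf_comm]⟩

@[simp] lemma keyF_mk (a b : Fin n) :
    keyF n s(a, b) = max a.val b.val * n + min a.val b.val := rfl

/-- cluster of a vertex -/
def cl (n : ℕ) (u : Fin n) : ℕ := u.val / (n / 3)

def e1 (G : SignedGraph n) : Sym2 (Fin n) → Bool :=
  Sym2.lift ⟨fun a b => decide (a ≠ b ∧ cl n a = cl n b ∧ G a b = false ∧ G b a = false),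
    fun a b => decide_eq_decide.mpr
      ⟨fun ⟨h1, h2, h3, h4⟩ => ⟨h1.symm, h2.symm, h4, h3⟩,
       fun ⟨h1, h2, h3, h4⟩ => ⟨h1.symm, h2.symm, h4, h3⟩⟩⟩

def e2 (G : SignedGraph n) : Sym2 (Fin n) → Bool :=
  Sym2.lift ⟨fun a b => decide (a ≠ b ∧ cl n a ≠ cl n b ∧ G a b = true ∧ G b a = true),
    fun a b => decide_eq_decide.mpr
      ⟨fun ⟨h1, h2, h3, h4⟩ => ⟨h1.symm, h2.symm, h4, h3⟩,
       fun ⟨h1, h2, h3, h4⟩ => ⟨h1.symm, h2.symm, h4, h3⟩⟩⟩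

lemma e1_mk {G : SignedGraph n} {a b : Fin n} :
    e1 G s(a, b) = true ↔ (a ≠ b ∧ cl n a = cl n b ∧ G a b = false ∧ G b a = false) := by
  unfold e1; rw [Sym2.lift_mk]; exact decide_eq_true_iff

lemma e2_mk {G : SignedGraph n} {a b : Fin n} :
    e2 G s(a, b) = true ↔ (a ≠ b ∧ cl n a ≠ cl n b ∧ G a b = true ∧ G b a = true) := by
  unfold e2; rw [Sym2.lift_mk]; exact decide_eq_true_iff

lemma lex_lt {N M m M' m' : ℕ} (hm : m < N) (hm' : m' < N) :
    M * N + m < M' * N + m' ↔ (M < M' ∨ (M = M' ∧ m < m')) := by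
  constructor
  · intro h
    rcases lt_trichotomy M M' with h1 | h1 | h1
    · exact Or.inl h1
    · refine Or.inr ⟨h1, ?_⟩
      subst h1
      exact Nat.lt_of_add_lt_add_left h
    · exfalso
      have h2 : (M' + 1) * N ≤ M * N := Nat.mul_le_mul_right N h1
      have h3 : M' * N + m' < M' * N + N := Nat.add_lt_add_left hm' _
      rw [show M' * N + N = (M' + 1) * N from (Nat.succ_mul M' N).symm] at h3
      have := h3.trans_le (h2.trans (Nat.le_add_right (M * N) m))
      exact absurd h (Nat.lt_asymm this)
  · rintro (h1 | ⟨rfl, h2⟩)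
    · calc M * N + m < M * N + N := Nat.add_lt_add_left hm _
        _ = (M + 1) * N := (Nat.succ_mul M N).symm
        _ ≤ M' * N := Nat.mul_le_mul_right N h1
        _ ≤ M' * N + m' := Nat.le_add_right _ _
    · exact Nat.add_lt_add_left h2 _

lemma lex_eq {N M m M' m' : ℕ} (hm : m < N) (hm' : m' < N) :
    M * N + m = M' * N + m' ↔ (M = M' ∧ m = m') := by
  constructor
  · intro h
    rcases lt_trichotomy M M' with h1 | h1 | h1
    · exact absurd ((lex_lt hm hm').mpr (Or.inl h1)) (by omega)
    · subst h1
      exact ⟨rfl, Nat.add_left_cancel h⟩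
    · exact absurd ((lex_lt hm' hm).mpr (Or.inl h1)) (by omega)
  · rintro ⟨rfl, rfl⟩; rfl

lemma keyF_lt_sq (hn : 0 < n) (p : Sym2 (Fin n)) : keyF n p < n * n := by
  induction p using Sym2.ind with
  | _ a b =>
    rw [keyF_mk]
    have h1 : max a.val b.val < n := max_lt a.isLt b.isLt
    have h2 : min a.val b.val < n := (min_le_left _ _).trans_lt a.isLt
    calc max a.val b.val * n + min a.val b.val < max a.val b.val * n + n :=
          Nat.add_lt_add_left h2 _
      _ = (max a.val b.val + 1) * n := (Nat.succ_mul _ _).symm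
      _ ≤ n * n := Nat.mul_le_mul_right n h1

lemma keyF_inj {p q : Sym2 (Fin n)} (h : keyF n p = keyF n q) : p = q := by
  induction p using Sym2.ind with
  | _ a b =>
    induction q using Sym2.ind with
    | _ c d =>
      rw [keyF_mk, keyF_mk] at h
      have hm1 : min a.val b.val < n := (min_le_left _ _).trans_lt a.isLt
      have hm2 : min c.val d.val < n := (min_le_left _ _).trans_lt c.isLt
      obtain ⟨hM, hm⟩ := (lex_eq hm1 hm2).mp h
      rw [Sym2.eq_iff]
      rcases le_total a.val b.val with h1 | h1 <;> rcases le_total c.val d.val with h2 | h2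
      · rw [max_eq_right h1, max_eq_right h2] at hM
        rw [min_eq_left h1, min_eq_left h2] at hm
        exact Or.inl ⟨Fin.ext hm, Fin.ext hM⟩
      · rw [max_eq_right h1, max_eq_left h2] at hM
        rw [min_eq_left h1, min_eq_right h2] at hm
        exact Or.inr ⟨Fin.ext hm, Fin.ext hM⟩
      · rw [max_eq_left h1, max_eq_right h2] at hM
        rw [min_eq_right h1, min_eq_left h2] at hm
        exact Or.inr ⟨Fin.ext hM, Fin.ext hm⟩
      · rw [max_eq_left h1, max_eq_left h2] at hM
        rw [min_eq_right h1, min_eq_right h2] at hm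
        exact Or.inl ⟨Fin.ext hM, Fin.ext hm⟩

/-- the set of edges flipped up to time `t` -/
def FF (G : SignedGraph n) (t : ℕ) : Finset (Sym2 (Fin n)) :=
  univ.filter (fun p => (e1 G p = true ∧ keyF n p < t) ∨ (e2 G p = true ∧ keyF n p + n * n < t))

lemma mem_FF {G : SignedGraph n} {t : ℕ} {p : Sym2 (Fin n)} :
    p ∈ FF G t ↔ (e1 G p = true ∧ keyF n p < t) ∨ (e2 G p = true ∧ keyF n p + n * n < t) := by
  unfold FF; simp

lemma FF_mono (G : SignedGraph n) (t : ℕ) : FF G t ⊆ FF G (t + 1) := by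
  intro p hp
  rw [mem_FF] at hp ⊢
  rcases hp with ⟨h1, h2⟩ | ⟨h1, h2⟩
  · exact Or.inl ⟨h1, by omega⟩
  · exact Or.inr ⟨h1, by omega⟩

end CTDProof
namespace CTDProof

variable {n : ℕ}

lemma card_pair_compl {u v : Fin n} (huv : u ≠ v) :
    (univ.filter (fun w : Fin n => w ≠ u ∧ w ≠ v)).card = n - 2 := by
  have h : (univ.filter (fun w : Fin n => w ≠ u ∧ w ≠ v)) = ({u, v} : Finset (Fin n))ᶜ := by
    ext w
    simp [not_or]
  rw [h, Finset.card_compl, Finset.card_insert_of_notMem (by simpa using huv),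
    Finset.card_singleton, Fintype.card_fin]

lemma cl_lt3 (h3 : 3 ∣ n) (u : Fin n) : cl n u < 3 := by
  have hnm : n / 3 * 3 = n := Nat.div_mul_cancel h3
  have hn0 : 0 < n := u.pos
  have hm0 : 0 < n / 3 := by omega
  unfold cl
  rw [Nat.div_lt_iff_lt_mul hm0]
  omega

lemma cluster_card_ge (h3 : 3 ∣ n) (hn : 0 < n) {c : ℕ} (hc : c < 3) :
    n / 3 ≤ (univ.filter (fun w : Fin n => cl n w = c)).card := by
  have hnm : n / 3 * 3 = n := Nat.div_mul_cancel h3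
  set m := n / 3 with hmdef
  have hm0 : 0 < m := by omega
  have key : ∀ i, i < m → c * m + i < n := by
    intro i hi
    have h2 : c * m ≤ 2 * m := Nat.mul_le_mul_right m (by omega)
    have h3' : m * 3 = n := by omega
    linarith
  refine le_trans (le_of_eq (Finset.card_range m).symm)
    (Finset.card_le_card_of_injOn
      (fun i => (⟨(c * m + i) % n, Nat.mod_lt _ hn⟩ : Fin n)) ?_ ?_)
  · intro i hi
    simp only [Finset.coe_range, Set.mem_Iio] at hi
    have hlt := key i hi
    simp only [Finset.mem_coe, Finset.mem_filter, Finset.mem_univ, true_and]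
    show (((c * m + i) % n : ℕ)) / (n / 3) = c
    rw [Nat.mod_eq_of_lt hlt, ← hmdef, mul_comm, Nat.mul_add_div hm0,
      Nat.div_eq_of_lt hi, add_zero]
  · intro i hi j hj hf
    simp only [Finset.coe_range, Set.mem_Iio] at hi hj
    have := congrArg Fin.val hf
    simp only [Nat.mod_eq_of_lt (key i hi), Nat.mod_eq_of_lt (key j hj)] at this
    exact Nat.add_left_cancel this

lemma same_cluster_gap (h3 : 3 ∣ n) (hn : 0 < n) {u v : Fin n} (hcl : cl n u = cl n v) :
    v.val - u.val ≤ n / 3 - 1 := by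
  have hnm : n / 3 * 3 = n := Nat.div_mul_cancel h3
  set m := n / 3 with hmdef
  have hm0 : 0 < m := by omega
  unfold cl at hcl
  rw [← hmdef] at hcl
  have h1 := Nat.div_add_mod u.val m
  have h2 := Nat.div_add_mod v.val m
  rw [hcl] at h1
  have hmu : u.val % m < m := Nat.mod_lt _ hm0
  have hmv : v.val % m < m := Nat.mod_lt _ hm0
  set K := m * (v.val / m) with hK
  set a := u.val % m with ha
  set b := v.val % m with hb
  omega

end CTDProof
namespace CTDProof

variable {n : ℕ}

lemma adm1 (hn : 12 ≤ n) (h3 : 3 ∣ n) (G : SignedGraph n) (hG : Symm G)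
    (hdeg : ∀ u : Fin n, 12 * (univ.filter (fun w => w ≠ u ∧ G u w = true)).card + 12 ≤ n)
    (t : ℕ) {u v : Fin n} (huv : u.val < v.val) (hcl : cl n u = cl n v)
    (hGuv : G u v = false) (ht : keyF n s(u, v) = t) :
    CTDAdmissible (perturb G (FF G t)) s(u, v) := by
  set H := perturb G (FF G t) with hH
  have hne : u ≠ v := fun h => absurd (congrArg Fin.val h) (Nat.ne_of_lt huv)
  have hGvu : G v u = false := by rw [hG v u]; exact hGuv
  have hsuv_not : s(u, v) ∉ FF G t := by
    rw [mem_FF]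
    rintro (⟨he, hk⟩ | ⟨he, hk⟩)
    · omega
    · rw [e2_mk] at he; exact he.2.1 hcl
  have hHuv : H u v = false := by
    rw [hH]; unfold perturb; rw [if_neg hsuv_not]; exact hGuv
  have hval : ∀ x y : Fin n, G x y = false → (H x y = true ↔ s(x, y) ∈ FF G t) := by
    intro x y hxy
    rw [hH]; unfold perturb
    by_cases hmem : s(x, y) ∈ FF G t
    · simp [hmem, hxy]
    · simp [hmem, hxy]
  have hmemiff : ∀ x y : Fin n, x ≠ y → G x y = false → G y x = false →
      (s(x, y) ∈ FF G t ↔ (cl n x = cl n y ∧ keyF n s(x, y) < t)) := by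
    intro x y hxy hxy0 hyx0
    rw [mem_FF]
    constructor
    · rintro (⟨he, hk⟩ | ⟨he, hk⟩)
      · exact ⟨(e1_mk.mp he).2.1, hk⟩
      · rw [e2_mk] at he; cases hxy0.symm.trans he.2.2.1
    · rintro ⟨hc, hk⟩
      exact Or.inl ⟨e1_mk.mpr ⟨hxy, hc, hxy0, hyx0⟩, hk⟩
  set T := univ.filter (fun w : Fin n => w ≠ u ∧ w ≠ v) with hT
  have hrank : rank H u v + (T.filter (fun w => ¬ H v w = H u w)).card = n - 2 := by
    have hset : univ.filter (fun w : Fin n => w ≠ u ∧ w ≠ v ∧ ¬ BalancedTriad H u v w)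
        = T.filter (fun w => H v w = H u w) := by
      rw [hT, Finset.filter_filter]
      apply Finset.filter_congr
      intro w _
      constructor
      · rintro ⟨h1, h2, h3⟩; exact ⟨⟨h1, h2⟩, (notbal_iff_false hHuv).mp h3⟩
      · rintro ⟨⟨h1, h2⟩, h3⟩; exact ⟨h1, h2, (notbal_iff_false hHuv).mpr h3⟩
    unfold rank
    rw [hset]
    rw [Finset.card_filter_add_card_filter_not]
    rw [hT, card_pair_compl hne]
  have htval : t = v.val * n + u.val := by
    rw [← ht, keyF_mk, max_eq_right huv.le, min_eq_left huv.le]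
  have hsub : T.filter (fun w => ¬ H v w = H u w) ⊆
      (univ.filter (fun w : Fin n => w ≠ u ∧ G u w = true)) ∪
      (univ.filter (fun w : Fin n => w ≠ v ∧ G v w = true)) ∪
      (univ.filter (fun w : Fin n => u.val < w.val ∧ w.val < v.val)) := by
    intro w hw
    rw [hT] at hw
    simp only [Finset.mem_filter, Finset.mem_univ, true_and] at hw
    obtain ⟨⟨hwu, hwv⟩, hne'⟩ := hw
    simp only [Finset.mem_union, Finset.mem_filter, Finset.mem_univ, true_and]
    by_contra hcon
    push_neg at hcon
    obtain ⟨⟨h1, h2⟩, hio⟩ := hcon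
    have hGuw : G u w = false := by
      cases hgw : G u w with
      | false => rfl
      | true => exact absurd hgw (h1 hwu)
    have hGvw : G v w = false := by
      cases hgw : G v w with
      | false => rfl
      | true => exact absurd hgw (h2 hwv)
    have hGwu : G w u = false := by rw [hG w u]; exact hGuw
    have hGwv : G w v = false := by rw [hG w v]; exact hGvw
    cases hHuw : H u w with
    | true =>
      cases hHvw : H v w with
      | true => exact hne' (hHvw.trans hHuw.symm)
      | false =>
        obtain ⟨hcw, hkuw⟩ :=
          (hmemiff u w hwu.symm hGuw hGwu).mp ((hval u w hGuw).mp hHuw)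
        have hvw_not : s(v, w) ∉ FF G t := fun hmem => by
          rw [(hval v w hGvw).mpr hmem] at hHvw; cases hHvw
        have hclvw : cl n v = cl n w := hcl.symm.trans hcw
        have hkvw : t ≤ keyF n s(v, w) :=
          not_lt.mp fun hk => hvw_not ((hmemiff v w hwv.symm hGvw hGwv).mpr ⟨hclvw, hk⟩)
        rw [keyF_mk] at hkuw hkvw
        rcases lt_trichotomy w.val u.val with hord | hord | hord
        · rw [max_eq_left (hord.trans huv).le, min_eq_right (hord.trans huv).le] at hkvw
          rw [htval] at hkvw
          have := Nat.le_of_add_le_add_left hkvw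
          omega
        · exact hwu (Fin.ext hord)
        · -- u < w, derive w < v to contradict hio
          rw [max_eq_right hord.le, min_eq_left hord.le] at hkuw
          rw [htval] at hkuw
          rcases (lex_lt u.isLt u.isLt).mp hkuw with hlt | ⟨heq, hlt⟩
          · have := hio hord; omega
          · exact absurd hlt (lt_irrefl _)
    | false =>
      cases hHvw : H v w with
      | false => exact hne' (hHvw.trans hHuw.symm)
      | true =>
        obtain ⟨hcw, hkvw⟩ :=
          (hmemiff v w hwv.symm hGvw hGwv).mp ((hval v w hGvw).mp hHvw)
        have huw_not : s(u, w) ∉ FF G t := fun hmem => by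
          rw [(hval u w hGuw).mpr hmem] at hHuw; cases hHuw
        have hcluw : cl n u = cl n w := hcl.trans hcw
        have hkuw : t ≤ keyF n s(u, w) :=
          not_lt.mp fun hk => huw_not ((hmemiff u w hwu.symm hGuw hGwu).mpr ⟨hcluw, hk⟩)
        rw [keyF_mk] at hkuw hkvw
        rcases lt_trichotomy w.val v.val with hord | hord | hord
        · -- w < v
          rw [max_eq_left hord.le, min_eq_right hord.le] at hkvw
          rw [htval] at hkvw hkuw
          have hwu' : w.val < u.val := by
            have := Nat.lt_of_add_lt_add_left hkvw
            exact this
          rw [max_eq_left hwu'.le, min_eq_right hwu'.le] at hkuw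
          have hlt : u.val * n + w.val < v.val * n + u.val :=
            (lex_lt w.isLt u.isLt).mpr (Or.inl huv)
          exact absurd (hkuw.trans_lt hlt) (lt_irrefl _)
        · exact hwv (Fin.ext hord)
        · -- v < w
          rw [max_eq_right hord.le, min_eq_left hord.le] at hkvw
          rw [htval] at hkvw
          have hlt : v.val * n + u.val < w.val * n + v.val :=
            (lex_lt u.isLt v.isLt).mpr (Or.inl hord)
          exact absurd (hlt.trans hkvw) (lt_irrefl _)
  have hIoo : (univ.filter (fun w : Fin n => u.val < w.val ∧ w.val < v.val)).card
      ≤ n / 3 - 2 := by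
    have h1 : (univ.filter (fun w : Fin n => u.val < w.val ∧ w.val < v.val)).card
        ≤ (Finset.Ioo u.val v.val).card := by
      refine Finset.card_le_card_of_injOn (fun w => w.val) ?_ ?_
      · intro w hw
        simp only [Finset.mem_coe, Finset.mem_filter, Finset.mem_univ, true_and] at hw
        rw [Finset.mem_coe, Finset.mem_Ioo]
        exact hw
      · intro a _ b _ h
        exact Fin.ext h
    rw [Nat.card_Ioo] at h1
    have h2 := same_cluster_gap h3 (by omega) hcl
    omega
  have hBle := Finset.card_le_card hsub
  have hU1 := Finset.card_union_le
    ((univ.filter (fun w : Fin n => w ≠ u ∧ G u w = true)) ∪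
      (univ.filter (fun w : Fin n => w ≠ v ∧ G v w = true)))
    (univ.filter (fun w : Fin n => u.val < w.val ∧ w.val < v.val))
  have hU2 := Finset.card_union_le
    (univ.filter (fun w : Fin n => w ≠ u ∧ G u w = true))
    (univ.filter (fun w : Fin n => w ≠ v ∧ G v w = true))
  have hfu := hdeg u
  have hfv := hdeg v
  refine ⟨u, v, rfl, hne, ?_, by omega⟩
  have hpos : 0 < rank H u v := by omega
  unfold rank at hpos
  obtain ⟨w, hw⟩ := Finset.card_pos.mp hpos
  simp only [Finset.mem_filter, Finset.mem_univ, true_and] at hw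
  exact ⟨w, hw.1, hw.2.1, hw.2.2⟩

end CTDProof
namespace CTDProof

variable {n : ℕ}

lemma adm2 (hn : 12 ≤ n) (h3 : 3 ∣ n) (G : SignedGraph n) (hG : Symm G)
    (hdeg : ∀ u : Fin n, 12 * (univ.filter (fun w => w ≠ u ∧ G u w = true)).card + 12 ≤ n)
    (t : ℕ) {u v : Fin n} (hne : u ≠ v) (hcl : cl n u ≠ cl n v)
    (hGuv : G u v = true) (ht : keyF n s(u, v) + n * n = t) :
    CTDAdmissible (perturb G (FF G t)) s(u, v) := by
  set H := perturb G (FF G t) with hH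
  have hGvu : G v u = true := by rw [hG v u]; exact hGuv
  have hsuv_not : s(u, v) ∉ FF G t := by
    rw [mem_FF]
    rintro (⟨he, hk⟩ | ⟨he, hk⟩)
    · rw [e1_mk] at he; cases hGuv.symm.trans he.2.2.1
    · omega
  have hHuv : H u v = true := by
    rw [hH]; unfold perturb; rw [if_neg hsuv_not]; exact hGuv
  have htn : n * n ≤ t := by omega
  have hfull1 : ∀ q, e1 G q = true → q ∈ FF G t := fun q hq =>
    mem_FF.mpr (Or.inl ⟨hq, lt_of_lt_of_le (keyF_lt_sq (by omega) q) htn⟩)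
  have hsame : ∀ x y : Fin n, x ≠ y → cl n x = cl n y → H x y = true := by
    intro x y hxy hcxy
    by_cases hxy0 : G x y = true
    · have hnotm : s(x, y) ∉ FF G t := by
        rw [mem_FF]
        rintro (⟨he, _⟩ | ⟨he, _⟩)
        · rw [e1_mk] at he; cases hxy0.symm.trans he.2.2.1
        · rw [e2_mk] at he; exact he.2.1 hcxy
      rw [hH]; unfold perturb; rw [if_neg hnotm]; exact hxy0
    · have hxyf : G x y = false := by
        cases h : G x y with
        | false => rfl
        | true => exact absurd h hxy0
      have hyxf : G y x = false := by rw [hG y x]; exact hxyf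
      have hm : s(x, y) ∈ FF G t := hfull1 _ (e1_mk.mpr ⟨hxy, hcxy, hxyf, hyxf⟩)
      rw [hH]; unfold perturb; rw [if_pos hm, hxyf]; rfl
  have hcross : ∀ x y : Fin n, cl n x ≠ cl n y → G x y = false → H x y = false := by
    intro x y hcxy hxy
    have hnotm : s(x, y) ∉ FF G t := by
      rw [mem_FF]
      rintro (⟨he, _⟩ | ⟨he, _⟩)
      · rw [e1_mk] at he; exact hcxy he.2.1
      · rw [e2_mk] at he; cases hxy.symm.trans he.2.2.1
    rw [hH]; unfold perturb; rw [if_neg hnotm]; exact hxy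
  set G1 := univ.filter (fun w : Fin n => cl n w = cl n u ∧ w ≠ u ∧ G v w = false) with hG1
  set G2 := univ.filter (fun w : Fin n => cl n w = cl n v ∧ w ≠ v ∧ G u w = false) with hG2
  have hsub : G1 ∪ G2 ⊆
      univ.filter (fun w : Fin n => w ≠ u ∧ w ≠ v ∧ ¬ BalancedTriad H u v w) := by
    intro w hw
    rw [Finset.mem_union, hG1, hG2] at hw
    simp only [Finset.mem_filter, Finset.mem_univ, true_and] at hw ⊢
    rcases hw with ⟨hcw, hwu, hvw⟩ | ⟨hcw, hwv, huw⟩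
    · have hwv : w ≠ v := fun h => hcl (hcw.symm.trans (congrArg (cl n) h))
      refine ⟨hwu, hwv, ?_⟩
      rw [notbal_iff_true hHuv]
      have h1 : H u w = true := hsame u w (Ne.symm hwu) hcw.symm
      have h2 : H v w = false :=
        hcross v w (fun h => hcl ((h.trans hcw).symm)) hvw
      rw [h1, h2]; simp
    · have hwu : w ≠ u := fun h => hcl ((congrArg (cl n) h).symm.trans hcw)
      refine ⟨hwu, hwv, ?_⟩
      rw [notbal_iff_true hHuv]
      have h1 : H v w = true := hsame v w (Ne.symm hwv) hcw.symm
      have h2 : H u w = false :=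
        hcross u w (fun h => hcl (h.trans hcw)) huw
      rw [h1, h2]; simp
  have hdisj : Disjoint G1 G2 := by
    rw [Finset.disjoint_left]
    intro w h1 h2
    rw [hG1] at h1
    rw [hG2] at h2
    simp only [Finset.mem_filter, Finset.mem_univ, true_and] at h1 h2
    exact hcl (h1.1.symm.trans h2.1)
  have hnm : n / 3 * 3 = n := Nat.div_mul_cancel h3
  have hG1card : n / 3 - 1 - (univ.filter (fun w : Fin n => w ≠ v ∧ G v w = true)).card
      ≤ G1.card := by
    set Fv := univ.filter (fun w : Fin n => w ≠ v ∧ G v w = true) with hFv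
    have hsub1 : (univ.filter (fun w : Fin n => cl n w = cl n u)) \ (insert u Fv) ⊆ G1 := by
      intro w hw
      rw [Finset.mem_sdiff, Finset.mem_insert] at hw
      obtain ⟨hw1, hw2⟩ := hw
      push_neg at hw2
      obtain ⟨hwu, hwFv⟩ := hw2
      simp only [Finset.mem_filter, Finset.mem_univ, true_and] at hw1
      rw [hG1]
      simp only [Finset.mem_filter, Finset.mem_univ, true_and]
      refine ⟨hw1, hwu, ?_⟩
      have hwv : w ≠ v := fun h => hcl (hw1.symm.trans (congrArg (cl n) h))
      rw [hFv] at hwFv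
      simp only [Finset.mem_filter, Finset.mem_univ, true_and] at hwFv
      cases h : G v w with
      | false => rfl
      | true => exact absurd ⟨hwv, h⟩ hwFv
    have hc1 : n / 3 ≤ (univ.filter (fun w : Fin n => cl n w = cl n u)).card :=
      cluster_card_ge h3 (by omega) (cl_lt3 h3 u)
    have hc2 : (insert u Fv).card ≤ Fv.card + 1 := Finset.card_insert_le _ _
    have hc3 := Finset.le_card_sdiff (insert u Fv)
      (univ.filter (fun w : Fin n => cl n w = cl n u))
    have hc4 := Finset.card_le_card hsub1
    omega
  have hG2card : n / 3 - 1 - (univ.filter (fun w : Fin n => w ≠ u ∧ G u w = true)).card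
      ≤ G2.card := by
    set Fu := univ.filter (fun w : Fin n => w ≠ u ∧ G u w = true) with hFu
    have hsub1 : (univ.filter (fun w : Fin n => cl n w = cl n v)) \ (insert v Fu) ⊆ G2 := by
      intro w hw
      rw [Finset.mem_sdiff, Finset.mem_insert] at hw
      obtain ⟨hw1, hw2⟩ := hw
      push_neg at hw2
      obtain ⟨hwv, hwFu⟩ := hw2
      simp only [Finset.mem_filter, Finset.mem_univ, true_and] at hw1
      rw [hG2]
      simp only [Finset.mem_filter, Finset.mem_univ, true_and]
      refine ⟨hw1, hwv, ?_⟩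
      rw [hFu] at hwFu
      simp only [Finset.mem_filter, Finset.mem_univ, true_and] at hwFu
      have hwu : w ≠ u := fun h => hcl ((congrArg (cl n) h).symm.trans hw1)
      cases h : G u w with
      | false => rfl
      | true => exact absurd ⟨hwu, h⟩ hwFu
    have hc1 : n / 3 ≤ (univ.filter (fun w : Fin n => cl n w = cl n v)).card :=
      cluster_card_ge h3 (by omega) (cl_lt3 h3 v)
    have hc2 : (insert v Fu).card ≤ Fu.card + 1 := Finset.card_insert_le _ _
    have hc3 := Finset.le_card_sdiff (insert v Fu)
      (univ.filter (fun w : Fin n => cl n w = cl n v))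
    have hc4 := Finset.card_le_card hsub1
    omega
  have hrank_ge : G1.card + G2.card ≤ rank H u v := by
    unfold rank
    rw [← Finset.card_union_of_disjoint hdisj]
    exact Finset.card_le_card hsub
  have hfu := hdeg u
  have hfv := hdeg v
  refine ⟨u, v, rfl, hne, ?_, by omega⟩
  have hpos : 0 < rank H u v := by omega
  unfold rank at hpos
  obtain ⟨w, hw⟩ := Finset.card_pos.mp hpos
  simp only [Finset.mem_filter, Finset.mem_univ, true_and] at hw
  exact ⟨w, hw.1, hw.2.1, hw.2.2⟩

end CTDProof
namespace CTDProof

variable {n : ℕ}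

lemma fresh_class (G : SignedGraph n) {t : ℕ} {p : Sym2 (Fin n)}
    (h1 : p ∈ FF G (t + 1)) (h0 : p ∉ FF G t) :
    (e1 G p = true ∧ keyF n p = t) ∨ (e2 G p = true ∧ keyF n p + n * n = t) := by
  rw [mem_FF] at h1 h0
  push_neg at h0
  rcases h1 with ⟨he, hk⟩ | ⟨he, hk⟩
  · exact Or.inl ⟨he, by have := h0.1 he; omega⟩
  · exact Or.inr ⟨he, by have := h0.2 he; omega⟩

lemma step_insert (hn0 : 0 < n) (G : SignedGraph n) {t : ℕ} {p : Sym2 (Fin n)}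
    (hp1 : p ∈ FF G (t + 1)) (hp0 : p ∉ FF G t) :
    FF G (t + 1) = insert p (FF G t) := by
  apply Finset.Subset.antisymm
  · intro q hq1
    rw [Finset.mem_insert]
    by_cases hq0 : q ∈ FF G t
    · exact Or.inr hq0
    · left
      have hq := fresh_class G hq1 hq0
      have hp := fresh_class G hp1 hp0
      rcases hq with ⟨hqe, hqk⟩ | ⟨hqe, hqk⟩ <;> rcases hp with ⟨hpe, hpk⟩ | ⟨hpe, hpk⟩
      · exact keyF_inj (hqk.trans hpk.symm)
      · exfalso; have := keyF_lt_sq hn0 q; omega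
      · exfalso; have := keyF_lt_sq hn0 p; omega
      · exact keyF_inj (by omega)
  · intro q hq
    rcases Finset.mem_insert.mp hq with rfl | h
    · exact hp1
    · exact FF_mono G t h

lemma adm_fresh (hn : 12 ≤ n) (h3 : 3 ∣ n) (G : SignedGraph n) (hG : Symm G)
    (hdeg : ∀ u : Fin n, 12 * (univ.filter (fun w => w ≠ u ∧ G u w = true)).card + 12 ≤ n)
    (t : ℕ) : ∀ p : Sym2 (Fin n),
    ((e1 G p = true ∧ keyF n p = t) ∨ (e2 G p = true ∧ keyF n p + n * n = t)) →
    CTDAdmissible (perturb G (FF G t)) p := by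
  intro p
  induction p using Sym2.ind with
  | _ a b =>
    rintro (⟨he, hk⟩ | ⟨he, hk⟩)
    · rw [e1_mk] at he
      obtain ⟨hab, hcab, hf1, hf2⟩ := he
      rcases lt_or_gt_of_ne (fun h : a.val = b.val => hab (Fin.ext h)) with ho | ho
      · exact adm1 hn h3 G hG hdeg t ho hcab hf1 hk
      · have hswap : s(a, b) = s(b, a) := Sym2.eq_swap
        rw [hswap] at hk ⊢
        exact adm1 hn h3 G hG hdeg t ho hcab.symm hf2 hk
    · rw [e2_mk] at he
      obtain ⟨hab, hcab, hf1, _⟩ := he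
      exact adm2 hn h3 G hG hdeg t hab hcab hf1 hk

lemma reach (hn : 12 ≤ n) (h3 : 3 ∣ n) (G : SignedGraph n) (hG : Symm G)
    (hdeg : ∀ u : Fin n, 12 * (univ.filter (fun w => w ≠ u ∧ G u w = true)).card + 12 ≤ n)
    (t : ℕ) :
    ∃ L, FlipSeq CTDAdmissible G L (perturb G (FF G t)) := by
  induction t with
  | zero =>
    refine ⟨[], ?_⟩
    have h0 : perturb G (FF G 0) = G := by
      funext x y
      have hxy : s(x, y) ∉ FF G 0 := by
        rw [mem_FF]; rintro (⟨_, h⟩ | ⟨_, h⟩) <;> omega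
      unfold perturb; rw [if_neg hxy]
    rw [h0]; exact FlipSeq.nil G
  | succ t ih =>
    obtain ⟨L, hL⟩ := ih
    by_cases heq : FF G (t + 1) = FF G t
    · refine ⟨L, ?_⟩; rw [heq]; exact hL
    · have hex : ∃ p, p ∈ FF G (t + 1) ∧ p ∉ FF G t := by
        by_contra hno
        push_neg at hno
        exact heq (Finset.Subset.antisymm (fun p hp => hno p hp) (FF_mono G t))
      obtain ⟨p, hp1, hp0⟩ := hex
      have hins : FF G (t + 1) = insert p (FF G t) := step_insert (by omega) G hp1 hp0
      have hadm : CTDAdmissible (perturb G (FF G t)) p :=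
        adm_fresh hn h3 G hG hdeg t p (fresh_class G hp1 hp0)
      refine ⟨L ++ [p], ?_⟩
      refine flipSeq_trans hL ?_
      rw [hins, ← flip_perturb G (FF G t) p hp0]
      exact FlipSeq.cons p hadm (FlipSeq.nil _)

end CTDProof
open CTDProof

/-- From any signed graph on `n ≥ 12` vertices (`3 ∣ n`) in which every vertex
has at most `n/12 - 1` friendships, some sequence of CTD-admissible flips reaches `J_n`. -/
theorem ctd_reaches_jammed (n : ℕ) (hn : 12 ≤ n) (h3 : 3 ∣ n)
    (G : SignedGraph n) (hG : Symm G)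
    (hdeg : ∀ u : Fin n,
      (((univ.filter (fun v => v ≠ u ∧ G u v = true)).card : ℝ)) ≤ (n : ℝ) / 12 - 1) :
    ∃ L : List (Sym2 (Fin n)), ∃ H : SignedGraph n,
      FlipSeq CTDAdmissible G L H ∧ ∀ u v : Fin n, u ≠ v → H u v = Jn n u v := by
  have hn0 : 0 < n := by omega
  have hdeg' : ∀ u : Fin n,
      12 * (univ.filter (fun w => w ≠ u ∧ G u w = true)).card + 12 ≤ n := by
    intro u
    have h := hdeg u
    have h2 : ((12 * (univ.filter (fun w : Fin n => w ≠ u ∧ G u w = true)).card + 12 : ℕ) : ℝ)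
        ≤ (n : ℝ) := by
      push_cast
      linarith
    exact_mod_cast h2
  obtain ⟨L, hL⟩ := CTDProof.reach hn h3 G hG hdeg' (n * n + n * n)
  refine ⟨L, _, hL, ?_⟩
  intro u v huv
  by_cases hc : cl n u = cl n v
  · have hJ : Jn n u v = true := by unfold Jn; exact decide_eq_true hc
    by_cases hg : G u v = true
    · have hnot : s(u, v) ∉ FF G (n * n + n * n) := by
        rw [mem_FF]
        rintro (⟨he, _⟩ | ⟨he, _⟩)
        · rw [e1_mk] at he; cases hg.symm.trans he.2.2.1
        · rw [e2_mk] at he; exact he.2.1 hc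
      unfold perturb; rw [if_neg hnot, hg, hJ]
    · have hgf : G u v = false := by
        cases h : G u v with
        | false => rfl
        | true => exact absurd h hg
      have hgv : G v u = false := by rw [hG v u]; exact hgf
      have hin : s(u, v) ∈ FF G (n * n + n * n) :=
        mem_FF.mpr (Or.inl ⟨e1_mk.mpr ⟨huv, hc, hgf, hgv⟩,
          by have := keyF_lt_sq hn0 s(u, v); omega⟩)
      unfold perturb; rw [if_pos hin, hgf, hJ]; rfl
  · have hJ : Jn n u v = false := by unfold Jn; exact decide_eq_false hc
    by_cases hg : G u v = true
    · have hgv : G v u = true := by rw [hG v u]; exact hg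
      have hin : s(u, v) ∈ FF G (n * n + n * n) :=
        mem_FF.mpr (Or.inr ⟨e2_mk.mpr ⟨huv, hc, hg, hgv⟩,
          by have := keyF_lt_sq hn0 s(u, v); omega⟩)
      unfold perturb; rw [if_pos hin, hg, hJ]; rfl
    · have hgf : G u v = false := by
        cases h : G u v with
        | false => rfl
        | true => exact absurd h hg
      have hnot : s(u, v) ∉ FF G (n * n + n * n) := by
        rw [mem_FF]
        rintro (⟨he, _⟩ | ⟨he, _⟩)
        · rw [e1_mk] at he; exact hc he.2.1
        · rw [e2_mk] at he; cases hgf.symm.trans he.2.2.1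
      unfold perturb; rw [if_neg hnot, hgf, hJ]
end

section
/- Let n be divisible by 3 and let E_0 be a set of edges of the complete graph on the n vertices of J_n such that every vertex is incident to at most n/12 − 1 edges of E_0. For every subset F ⊆ E_0, consider the signed graph G_F obtained from J_n by flipping exactly the edges in F. Then: (a) every edge not in F is contained in at least n/2 balanced triads of G_F (and hence has rank at most n/2 − 2 in G_F); and (b) every edge in F has rank at least n/2 in G_F. -/
open Finset

lemma filter_ne_ne_card {n : ℕ} (u v : Fin n) (huv : u ≠ v) :
    (univ.filter (fun w : Fin n => w ≠ u ∧ w ≠ v)).card = n - 2 := by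
  have h : (univ.filter (fun w : Fin n => w ≠ u ∧ w ≠ v)) = univ \ {u, v} := by
    ext w; simp [not_or]
  rw [h, Finset.card_sdiff_of_subset (Finset.subset_univ _), Finset.card_pair huv,
    Finset.card_univ, Fintype.card_fin]

lemma cluster_card (m : ℕ) (hm : 0 < m) (i : ℕ) (hi : i < 3) :
    (univ.filter (fun w : Fin (3*m) => w.val / m = i)).card = m := by
  have key : (univ.filter (fun w : Fin (3*m) => w.val / m = i)).card
      = (Finset.range m).card := by
    apply Finset.card_bij (fun w _ => w.val - i * m)
    · intro a ha
      simp only [mem_filter, mem_univ, true_and] at ha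
      have h1 : i * m ≤ a.val := by
        rw [← ha]; exact Nat.div_mul_le_self a.val m
      have h2 : a.val < (i+1) * m := by
        refine (Nat.div_lt_iff_lt_mul hm).mp ?_
        omega
      have h3 : (i+1) * m = i * m + m := by ring
      simp only [Finset.mem_range]; omega
    · intro a ha b hb hab
      simp only [mem_filter, mem_univ, true_and] at ha hb
      have ha1 : i * m ≤ a.val := by rw [← ha]; exact Nat.div_mul_le_self a.val m
      have hb1 : i * m ≤ b.val := by rw [← hb]; exact Nat.div_mul_le_self b.val m
      exact Fin.ext (by omega)
    · intro b hb
      simp only [Finset.mem_range] at hb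
      have hlt : i * m + b < 3 * m := by
        have : (i + 1) * m ≤ 3 * m := Nat.mul_le_mul_right m (by omega)
        calc i * m + b < i * m + m := by omega
          _ = (i + 1) * m := by ring
          _ ≤ 3 * m := this
      refine ⟨⟨i * m + b, hlt⟩, ?_, ?_⟩
      · simp only [mem_filter, mem_univ, true_and]
        rw [mul_comm i m, Nat.mul_add_div hm, Nat.div_eq_of_lt hb]
        omega
      · simp

  rw [key, Finset.card_range]

lemma Jn_char (m : ℕ) (u v : Fin (3*m)) :
    Jn (3*m) u v = decide (u.val / m = v.val / m) := by
  unfold Jn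
  rw [Nat.mul_div_cancel_left m (by norm_num)]

lemma Jn_bt (m : ℕ) (u v w : Fin (3*m)) :
    BalancedTriad (Jn (3*m)) u v w ↔
      ¬(u.val/m ≠ v.val/m ∧ v.val/m ≠ w.val/m ∧ u.val/m ≠ w.val/m) := by
  simp only [BalancedTriad, Jn_char m]
  generalize u.val / m = a
  generalize v.val / m = b
  generalize w.val / m = c
  by_cases h1 : a = b <;> by_cases h2 : b = c <;> by_cases h3 : a = c <;>
    simp [h1, h2, h3] <;> omega

lemma bt_perturb {n : ℕ} (G : SignedGraph n) (F : Finset (Sym2 (Fin n))) (u v w : Fin n)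
    (huw : s(u,w) ∉ F) (hvw : s(v,w) ∉ F) :
    (BalancedTriad (perturb G F) u v w ↔
      (if s(u,v) ∈ F then ¬ BalancedTriad G u v w else BalancedTriad G u v w)) := by
  simp only [BalancedTriad, perturb, if_neg huw, if_neg hvw]
  split_ifs with h
  · cases G u v <;> cases G v w <;> cases G u w <;> simp
  · exact Iff.rfl

lemma flip_deg {n : ℕ} (F E0 : Finset (Sym2 (Fin n))) (hF : F ⊆ E0) (u : Fin n) :
    (univ.filter (fun w : Fin n => s(u,w) ∈ F)).card ≤ (E0.filter (fun p => u ∈ p)).card := by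
  apply Finset.card_le_card_of_injOn (fun w => s(u,w))
  · intro w hw
    simp only [Finset.mem_coe, mem_filter, mem_univ, true_and] at hw ⊢
    exact ⟨hF hw, Sym2.mem_mk_left u w⟩
  · intro a _ b _ hab
    rcases Sym2.eq_iff.mp hab with ⟨_, h⟩ | ⟨h1, h2⟩
    · exact h
    · exact h2.trans h1

lemma rank_add_bal {n : ℕ} (G : SignedGraph n) (u v : Fin n) (huv : u ≠ v) :
    (univ.filter (fun w => w ≠ u ∧ w ≠ v ∧ BalancedTriad G u v w)).card + rank G u v
      = n - 2 := by
  have e1 : univ.filter (fun w => w ≠ u ∧ w ≠ v ∧ BalancedTriad G u v w)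
      = (univ.filter (fun w : Fin n => w ≠ u ∧ w ≠ v)).filter
          (fun w => BalancedTriad G u v w) := by
    rw [Finset.filter_filter]; apply Finset.filter_congr; intro w _; tauto
  have e2 : univ.filter (fun w => w ≠ u ∧ w ≠ v ∧ ¬ BalancedTriad G u v w)
      = (univ.filter (fun w : Fin n => w ≠ u ∧ w ≠ v)).filter
          (fun w => ¬ BalancedTriad G u v w) := by
    rw [Finset.filter_filter]; apply Finset.filter_congr; intro w _; tauto
  rw [rank, e1, e2, Finset.card_filter_add_card_filter_not,
    filter_ne_ne_card u v huv]

/-- Perturbing `J_n` by any subset `F` of a sparse edge set `E_0`: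
(a) every edge not in `F` lies in at least `n/2` balanced triads (hence has rank at most
`n/2 - 2`); (b) every edge in `F` has rank at least `n/2`. -/
theorem perturbed_Jn_ranks (n : ℕ) (h3 : 3 ∣ n) (E0 : Finset (Sym2 (Fin n)))
    (hE0 : ∀ p ∈ E0, ¬ p.IsDiag)
    (hdeg : ∀ u : Fin n, ((E0.filter (fun p => u ∈ p)).card : ℝ) ≤ (n : ℝ) / 12 - 1)
    (F : Finset (Sym2 (Fin n))) (hF : F ⊆ E0) :
    (∀ u v : Fin n, u ≠ v → s(u, v) ∉ F →
      (n : ℝ) / 2 ≤ ((univ.filter (fun w => w ≠ u ∧ w ≠ v ∧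
          BalancedTriad (perturb (Jn n) F) u v w)).card : ℝ) ∧
      (rank (perturb (Jn n) F) u v : ℝ) ≤ (n : ℝ) / 2 - 2) ∧
    (∀ u v : Fin n, u ≠ v → s(u, v) ∈ F →
      (n : ℝ) / 2 ≤ (rank (perturb (Jn n) F) u v : ℝ)) := by
  by_cases hn0 : n = 0
  · subst hn0
    exact ⟨fun u => u.elim0, fun u => u.elim0⟩
  have hpos : 0 < n := Nat.pos_of_ne_zero hn0
  have h12 : 12 ≤ n := by
    have hd := hdeg ⟨0, hpos⟩
    have h0 : (0:ℝ) ≤ ((E0.filter (fun p => (⟨0, hpos⟩ : Fin n) ∈ p)).card : ℝ) :=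
      Nat.cast_nonneg _
    have h1 : (12:ℝ) ≤ (n:ℝ) := by linarith
    exact_mod_cast h1
  obtain ⟨m, rfl⟩ := h3
  have hm : 4 ≤ m := by omega
  have hm0 : 0 < m := by omega
  -- bound on the number of affected third vertices
  have hScard : ∀ u v : Fin (3*m),
      (((univ.filter (fun w : Fin (3*m) => s(u,w) ∈ F ∨ s(v,w) ∈ F)).card : ℝ))
        ≤ ((3*m : ℕ) : ℝ)/6 - 2 := by
    intro u v
    have hsub : univ.filter (fun w : Fin (3*m) => s(u,w) ∈ F ∨ s(v,w) ∈ F) ⊆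
        univ.filter (fun w : Fin (3*m) => s(u,w) ∈ F)
          ∪ univ.filter (fun w : Fin (3*m) => s(v,w) ∈ F) := by
      intro w hw
      simp only [mem_filter, mem_univ, true_and, Finset.mem_union] at hw ⊢
      exact hw
    have h1 := flip_deg F E0 hF u
    have h2 := flip_deg F E0 hF v
    have h3 := Finset.card_le_card hsub
    have h4 := Finset.card_union_le (univ.filter (fun w : Fin (3*m) => s(u,w) ∈ F))
      (univ.filter (fun w : Fin (3*m) => s(v,w) ∈ F))
    have hu := hdeg u
    have hv := hdeg v
    have hn : (univ.filter (fun w : Fin (3*m) => s(u,w) ∈ F ∨ s(v,w) ∈ F)).card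
        ≤ (E0.filter (fun p => u ∈ p)).card + (E0.filter (fun p => v ∈ p)).card := by
      omega
    have hn' : (((univ.filter (fun w : Fin (3*m) => s(u,w) ∈ F ∨ s(v,w) ∈ F)).card : ℝ))
        ≤ ((E0.filter (fun p => u ∈ p)).card : ℝ)
          + ((E0.filter (fun p => v ∈ p)).card : ℝ) := by exact_mod_cast hn
    linarith
  -- lower bound on balanced triads in Jn
  have hB : ∀ u v : Fin (3*m), u ≠ v →
      2*m ≤ (univ.filter (fun w => w ≠ u ∧ w ≠ v ∧
        BalancedTriad (Jn (3*m)) u v w)).card + 2 := by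
    intro u v huv
    by_cases hc : u.val/m = v.val/m
    · have he : univ.filter (fun w => w ≠ u ∧ w ≠ v ∧ BalancedTriad (Jn (3*m)) u v w)
          = univ.filter (fun w : Fin (3*m) => w ≠ u ∧ w ≠ v) := by
        ext w
        simp only [mem_filter, mem_univ, true_and, Jn_bt m]
        tauto
      rw [he, filter_ne_ne_card u v huv]
      omega
    · set A := univ.filter (fun w : Fin (3*m) => w.val/m = u.val/m) with hA
      set Bv := univ.filter (fun w : Fin (3*m) => w.val/m = v.val/m) with hBv
      have hsub : (A ∪ Bv) \ {u, v} ⊆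
          univ.filter (fun w => w ≠ u ∧ w ≠ v ∧ BalancedTriad (Jn (3*m)) u v w) := by
        intro w hw
        simp only [hA, hBv, Finset.mem_sdiff, Finset.mem_union, mem_filter, mem_univ,
          true_and, Finset.mem_insert, Finset.mem_singleton, not_or, Jn_bt m] at hw ⊢
        obtain ⟨h1, h2, h3⟩ := hw
        exact ⟨h2, h3, by tauto⟩
      have hdisj : Disjoint A Bv := by
        rw [Finset.disjoint_left]
        intro w hwA hwB
        simp only [hA, hBv, mem_filter, mem_univ, true_and] at hwA hwB
        exact hc (hwA ▸ hwB)
      have hu3 : u.val / m < 3 := (Nat.div_lt_iff_lt_mul hm0).mpr u.isLt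
      have hv3 : v.val / m < 3 := (Nat.div_lt_iff_lt_mul hm0).mpr v.isLt
      have hAc : A.card = m := cluster_card m hm0 _ hu3
      have hBc : Bv.card = m := cluster_card m hm0 _ hv3
      have hUc : (A ∪ Bv).card = 2*m := by
        rw [Finset.card_union_of_disjoint hdisj, hAc, hBc]; ring
      have huv2 : ({u, v} : Finset (Fin (3*m))) ⊆ A ∪ Bv := by
        intro x hx
        simp only [Finset.mem_insert, Finset.mem_singleton] at hx
        rcases hx with rfl | rfl
        · exact Finset.mem_union_left _ (by simp [hA])
        · exact Finset.mem_union_right _ (by simp [hBv])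
      have hsd : ((A ∪ Bv) \ {u, v}).card = 2*m - 2 := by
        rw [Finset.card_sdiff_of_subset huv2, hUc, Finset.card_pair huv]
      have := Finset.card_le_card hsub
      omega
  constructor
  · -- (a) edges not in F
    intro u v huv hnF
    set Bp := univ.filter (fun w => w ≠ u ∧ w ≠ v ∧
      BalancedTriad (perturb (Jn (3*m)) F) u v w) with hBp
    set S := univ.filter (fun w : Fin (3*m) => s(u,w) ∈ F ∨ s(v,w) ∈ F) with hS
    have hsub : univ.filter (fun w => w ≠ u ∧ w ≠ v ∧ BalancedTriad (Jn (3*m)) u v w)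
        ⊆ Bp ∪ S := by
      intro w hw
      simp only [mem_filter, mem_univ, true_and] at hw
      by_cases hwS : w ∈ S
      · exact Finset.mem_union_right _ hwS
      · refine Finset.mem_union_left _ ?_
        simp only [hS, mem_filter, mem_univ, true_and, not_or] at hwS
        simp only [hBp, mem_filter, mem_univ, true_and]
        refine ⟨hw.1, hw.2.1, ?_⟩
        rw [bt_perturb _ F u v w hwS.1 hwS.2, if_neg hnF]
        exact hw.2.2
    have hcard : (univ.filter (fun w => w ≠ u ∧ w ≠ v ∧
        BalancedTriad (Jn (3*m)) u v w)).card ≤ Bp.card + S.card :=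
      le_trans (Finset.card_le_card hsub) (Finset.card_union_le _ _)
    have hBn := hB u v huv
    have hSn := hScard u v
    have hc1 : ((2*m : ℕ) : ℝ) ≤ (Bp.card : ℝ) + (S.card : ℝ) + 2 := by
      have : 2*m ≤ Bp.card + S.card + 2 := by omega
      exact_mod_cast this
    have hmain : ((3*m : ℕ) : ℝ) / 2 ≤ (Bp.card : ℝ) := by
      push_cast at hc1 hSn ⊢
      linarith
    refine ⟨hmain, ?_⟩
    have hpart := rank_add_bal (perturb (Jn (3*m)) F) u v huv
    rw [← hBp] at hpart
    have hre : (Bp.card : ℝ) + (rank (perturb (Jn (3*m)) F) u v : ℝ)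
        = ((3*m : ℕ) : ℝ) - 2 := by
      have h2m : (2:ℕ) ≤ 3*m := by omega
      have : ((Bp.card + rank (perturb (Jn (3*m)) F) u v : ℕ) : ℝ)
          = ((3*m - 2 : ℕ) : ℝ) := congrArg (Nat.cast : ℕ → ℝ) hpart
      rw [Nat.cast_sub h2m] at this
      push_cast at this ⊢
      linarith
    linarith
  · -- (b) edges in F
    intro u v huv hmemF
    set S := univ.filter (fun w : Fin (3*m) => s(u,w) ∈ F ∨ s(v,w) ∈ F) with hS
    have hsub : univ.filter (fun w => w ≠ u ∧ w ≠ v ∧ BalancedTriad (Jn (3*m)) u v w)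
        ⊆ (univ.filter (fun w => w ≠ u ∧ w ≠ v ∧
            ¬ BalancedTriad (perturb (Jn (3*m)) F) u v w)) ∪ S := by
      intro w hw
      simp only [mem_filter, mem_univ, true_and] at hw
      by_cases hwS : w ∈ S
      · exact Finset.mem_union_right _ hwS
      · refine Finset.mem_union_left _ ?_
        simp only [hS, mem_filter, mem_univ, true_and, not_or] at hwS
        simp only [mem_filter, mem_univ, true_and]
        refine ⟨hw.1, hw.2.1, ?_⟩
        rw [bt_perturb _ F u v w hwS.1 hwS.2, if_pos hmemF]
        exact not_not_intro hw.2.2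
    have hcard : (univ.filter (fun w => w ≠ u ∧ w ≠ v ∧
        BalancedTriad (Jn (3*m)) u v w)).card
          ≤ rank (perturb (Jn (3*m)) F) u v + S.card :=
      le_trans (Finset.card_le_card hsub) (Finset.card_union_le _ _)
    have hBn := hB u v huv
    have hSn := hScard u v
    have hc1 : ((2*m : ℕ) : ℝ) ≤ (rank (perturb (Jn (3*m)) F) u v : ℝ) + (S.card : ℝ) + 2 := by
      have : 2*m ≤ rank (perturb (Jn (3*m)) F) u v + S.card + 2 := by omega
      exact_mod_cast this
    push_cast at hc1 hSn ⊢
    linarith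
end

section
/- Let n ≥ 12 be divisible by 3 and let E_0 be a set of edges of the complete graph on the n vertices of J_n such that every vertex is incident to at most n/12 − 1 edges of E_0. Let S_n be the signed graph obtained from J_n by flipping exactly the edges of E_0. Then every maximal sequence of CTD-admissible flips starting from S_n is finite, has length exactly |E_0|, flips each edge of E_0 exactly once and no other edge, and terminates in the state J_n. -/
open Finset

namespace CTDAux

open Finset

variable {n : ℕ}

/-- cluster index of a vertex -/
def cl (n : ℕ) (u : Fin n) : ℕ := u.val / (n / 3)

lemma Jn_eq (u v : Fin n) : Jn n u v = decide (cl n u = cl n v) := rfl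

/-- degree of a vertex in an edge set -/
def degF (F : Finset (Sym2 (Fin n))) (u : Fin n) : ℕ := (F.filter (fun p => u ∈ p)).card

lemma degF_mono {F F' : Finset (Sym2 (Fin n))} (h : F ⊆ F') (u : Fin n) :
    degF F u ≤ degF F' u :=
  card_le_card (filter_subset_filter _ h)

lemma filter_card_compare {α : Type*} [DecidableEq α] (N : Finset α)
    (P Q D : α → Prop) [DecidablePred P] [DecidablePred Q] [DecidablePred D]
    (h : ∀ w ∈ N, ¬ D w → (P w ↔ Q w)) :
    (N.filter P).card ≤ (N.filter Q).card + (N.filter D).card := by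
  calc (N.filter P).card ≤ (N.filter Q ∪ N.filter D).card := by
        apply card_le_card
        intro w hw
        simp only [mem_filter, mem_union] at *
        by_cases hD : D w
        · exact Or.inr ⟨hw.1, hD⟩
        · exact Or.inl ⟨hw.1, (h w hw.1 hD).1 hw.2⟩
    _ ≤ _ := card_union_le _ _

lemma cluster_card_aux (m i : ℕ) (hm : 0 < m) (hi : i < 3) :
    ((univ : Finset (Fin (3 * m))).filter (fun w => w.val / m = i)).card = m := by
  have key : ∀ w : ℕ, i * m ≤ w → w < i * m + m → w / m = i := fun w h1 h2 =>
    Nat.div_eq_of_lt_le h1 (by rw [add_mul, one_mul]; exact h2)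
  have key1 : ∀ w : ℕ, w / m = i → i * m ≤ w ∧ w < i * m + m := by
    intro w hw
    have h := (Nat.div_add_mod w m).symm
    have h2 := Nat.mod_lt w hm
    constructor
    · rw [← hw, mul_comm]
      exact Nat.le.intro (Nat.div_add_mod w m)
    · rw [← hw, mul_comm]
      calc w = m * (w / m) + w % m := h
        _ < m * (w / m) + m := Nat.add_lt_add_left h2 _
  have himb : i * m + m ≤ 3 * m := by
    calc i * m + m = (i + 1) * m := by rw [add_mul, one_mul]
      _ ≤ 3 * m := Nat.mul_le_mul_right m hi
  have h : ((univ : Finset (Fin (3 * m))).filter (fun w => w.val / m = i)).card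
      = (univ : Finset (Fin m)).card := by
    refine Finset.card_bij'
      (fun w hw => (⟨w.val - i * m, ?_⟩ : Fin m))
      (fun k _ => (⟨i * m + k.val, ?_⟩ : Fin (3 * m))) ?_ ?_ ?_ ?_
    · obtain ⟨h1, h2⟩ := key1 w.val (mem_filter.mp hw).2
      generalize hg : i * m = t at h1 h2 ⊢
      omega
    · calc i * m + k.val < i * m + m := Nat.add_lt_add_left k.isLt _
        _ ≤ 3 * m := himb
    · intro a ha; exact mem_univ _
    · intro k _
      simp only [mem_filter, mem_univ, true_and]
      exact key _ (Nat.le_add_right _ _) (Nat.add_lt_add_left k.isLt _)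
    · intro a ha
      obtain ⟨h1, h2⟩ := key1 a.val (mem_filter.mp ha).2
      apply Fin.ext
      simp only
      exact Nat.add_sub_cancel' h1
    · intro k _
      apply Fin.ext
      simp only
      generalize hg : i * m = t
      omega
  simpa using h

lemma cl_lt (hn : 12 ≤ n) (h3 : 3 ∣ n) (u : Fin n) : cl n u < 3 := by
  obtain ⟨m, rfl⟩ := h3
  have hm : 0 < m := by omega
  have h3m : (3 * m) / 3 = m := by omega
  unfold cl
  rw [h3m, Nat.div_lt_iff_lt_mul hm]
  have := u.isLt; omega

lemma cluster_card (hn : 12 ≤ n) (h3 : 3 ∣ n) (i : ℕ) (hi : i < 3) :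
    ((univ : Finset (Fin n)).filter (fun w => cl n w = i)).card = n / 3 := by
  obtain ⟨m, rfl⟩ := h3
  have hm : 0 < m := by omega
  have h3m : (3 * m) / 3 = m := by omega
  unfold cl
  rw [h3m]
  exact cluster_card_aux m i hm hi

lemma D_card_le (F : Finset (Sym2 (Fin n))) (u v : Fin n) :
    (univ.filter (fun w : Fin n => w ≠ u ∧ w ≠ v ∧ (s(u, w) ∈ F ∨ s(v, w) ∈ F))).card
      ≤ degF F u + degF F v := by
  have h1 : ∀ x : Fin n,
      (univ.filter (fun w : Fin n => w ≠ x ∧ s(x, w) ∈ F)).card ≤ degF F x := by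
    intro x
    apply card_le_card_of_injOn (fun w => s(x, w))
    · intro w hw
      simp only [mem_coe, coe_filter, Set.mem_setOf_eq, mem_filter, mem_univ, true_and] at hw
      simp only [mem_coe, mem_filter]
      exact ⟨hw.2, Sym2.mem_mk_left x w⟩
    · intro a ha b hb hab
      simp only [coe_filter, Set.mem_setOf_eq, mem_univ, true_and] at ha hb
      rcases Sym2.eq_iff.mp hab with ⟨-, h⟩ | ⟨h1, h2⟩
      · exact h
      · exact absurd h2 ha.1
  calc (univ.filter (fun w : Fin n => w ≠ u ∧ w ≠ v ∧ (s(u, w) ∈ F ∨ s(v, w) ∈ F))).card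
      ≤ ((univ.filter (fun w : Fin n => w ≠ u ∧ s(u, w) ∈ F)) ∪
         (univ.filter (fun w : Fin n => w ≠ v ∧ s(v, w) ∈ F))).card := by
        apply card_le_card
        intro w hw
        simp only [mem_filter, mem_univ, true_and, mem_union] at hw ⊢
        rcases hw.2.2 with h | h
        · exact Or.inl ⟨hw.1, h⟩
        · exact Or.inr ⟨hw.2.1, h⟩
    _ ≤ _ := le_trans (card_union_le _ _) (Nat.add_le_add (h1 u) (h1 v))

lemma rank_compare (F : Finset (Sym2 (Fin n))) (u v : Fin n) :
    rank (perturb (Jn n) F) u v ≤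
      (univ.filter (fun w : Fin n => w ≠ u ∧ w ≠ v ∧
        (Bool.xor (perturb (Jn n) F u v) (Bool.xor (Jn n v w) (Jn n u w)) = false))).card +
      (univ.filter (fun w : Fin n => w ≠ u ∧ w ≠ v ∧ (s(u, w) ∈ F ∨ s(v, w) ∈ F))).card ∧
    (univ.filter (fun w : Fin n => w ≠ u ∧ w ≠ v ∧
        (Bool.xor (perturb (Jn n) F u v) (Bool.xor (Jn n v w) (Jn n u w)) = false))).card ≤
      rank (perturb (Jn n) F) u v +
      (univ.filter (fun w : Fin n => w ≠ u ∧ w ≠ v ∧ (s(u, w) ∈ F ∨ s(v, w) ∈ F))).card := by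
  have hiff : ∀ w : Fin n, ¬ (w ≠ u ∧ w ≠ v ∧ (s(u, w) ∈ F ∨ s(v, w) ∈ F)) →
      ((w ≠ u ∧ w ≠ v ∧ ¬ BalancedTriad (perturb (Jn n) F) u v w) ↔
       (w ≠ u ∧ w ≠ v ∧
        (Bool.xor (perturb (Jn n) F u v) (Bool.xor (Jn n v w) (Jn n u w)) = false))) := by
    intro w hD
    by_cases hu : w = u
    · simp [hu]
    by_cases hv : w = v
    · simp [hv]
    have hD' : s(u, w) ∉ F ∧ s(v, w) ∉ F := by
      by_contra h
      exact hD ⟨hu, hv, by tauto⟩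
    have e1 : perturb (Jn n) F v w = Jn n v w := by
      simp [perturb, hD'.2]
    have e2 : perturb (Jn n) F u w = Jn n u w := by
      simp [perturb, hD'.1]
    simp only [BalancedTriad, e1, e2, Bool.not_eq_true, hu, hv, true_and,
      ne_eq, not_false_iff]
  constructor
  · exact filter_card_compare univ _ _ _ (fun w _ => hiff w)
  · exact filter_card_compare univ _ _ _ (fun w _ h => (hiff w h).symm)

lemma card_ne_ne {u v : Fin n} (huv : u ≠ v) :
    (univ.filter (fun w : Fin n => w ≠ u ∧ w ≠ v)).card = n - 2 := by
  have h : univ.filter (fun w : Fin n => w ≠ u ∧ w ≠ v) = ({u, v} : Finset (Fin n))ᶜ := by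
    ext w; simp [not_or]
  rw [h, card_compl, Fintype.card_fin, card_insert_of_notMem (by simp [huv]), card_singleton]

lemma rank_lb (hn : 12 ≤ n) (h3 : 3 ∣ n) (F : Finset (Sym2 (Fin n)))
    (hFdeg : ∀ u, 12 * degF F u + 12 ≤ n)
    (u v : Fin n) (huv : u ≠ v) (hp : s(u, v) ∈ F) :
    n - 2 ≤ 2 * rank (perturb (Jn n) F) u v ∧ 0 < rank (perturb (Jn n) F) u v := by
  obtain ⟨hc1, hc2⟩ := rank_compare F u v
  have hD := D_card_le F u v
  have d1 := hFdeg u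
  have d2 := hFdeg v
  by_cases hc : cl n u = cl n v
  · have hguv : perturb (Jn n) F u v = false := by
      simp only [perturb, if_pos hp, Jn_eq, Bool.not_eq_false']
      exact decide_eq_true hc
    have hQ : (univ.filter (fun w : Fin n => w ≠ u ∧ w ≠ v ∧
        (Bool.xor (perturb (Jn n) F u v) (Bool.xor (Jn n v w) (Jn n u w)) = false))) =
        univ.filter (fun w : Fin n => w ≠ u ∧ w ≠ v) := by
      apply filter_congr
      intro w _
      simp [hguv, Jn_eq, ← hc]
    rw [hQ, card_ne_ne huv] at hc2
    constructor <;> omega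
  · have hguv : perturb (Jn n) F u v = true := by
      simp only [perturb, if_pos hp, Jn_eq, Bool.not_eq_true']
      exact decide_eq_false hc
    have h3n : 3 * (n / 3) = n := Nat.mul_div_cancel' h3
    set A := univ.filter (fun w : Fin n => cl n w = cl n u) with hA
    set B := univ.filter (fun w : Fin n => cl n w = cl n v) with hB
    have hAB : Disjoint A B := by
      rw [disjoint_left]
      intro a haA haB
      rw [hA, mem_filter] at haA
      rw [hB, mem_filter] at haB
      exact hc (haA.2 ▸ haB.2)
    have hAcard : A.card = n / 3 := cluster_card hn h3 _ (cl_lt hn h3 u)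
    have hBcard : B.card = n / 3 := cluster_card hn h3 _ (cl_lt hn h3 v)
    have hsub : (A ∪ B) \ {u, v} ⊆ univ.filter (fun w : Fin n => w ≠ u ∧ w ≠ v ∧
        (Bool.xor (perturb (Jn n) F u v) (Bool.xor (Jn n v w) (Jn n u w)) = false)) := by
      intro w hw
      rw [mem_sdiff, mem_union, hA, hB, mem_filter, mem_filter] at hw
      have hwu : w ≠ u := fun h => hw.2 (by simp [h])
      have hwv : w ≠ v := fun h => hw.2 (by simp [h])
      refine mem_filter.mpr ⟨mem_univ _, hwu, hwv, ?_⟩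
      rcases hw.1 with h | h
      · have h2 : cl n v ≠ cl n w := fun hh => hc ((h.2 ▸ hh : cl n v = cl n u)).symm
        simp [hguv, Jn_eq, h.2.symm, h2]
      · have h2 : cl n u ≠ cl n w := fun hh => hc (h.2 ▸ hh : cl n u = cl n v)
        simp [hguv, Jn_eq, h.2.symm, h2]
    have hcard2 : ({u, v} : Finset (Fin n)).card = 2 := by
      rw [card_insert_of_notMem (by simp [huv]), card_singleton]
    have hABcard : (A ∪ B).card = n / 3 + n / 3 := by
      rw [card_union_of_disjoint hAB, hAcard, hBcard]
    have hge := le_card_sdiff ({u, v} : Finset (Fin n)) (A ∪ B)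
    have hle := card_le_card hsub
    rw [hABcard, hcard2] at hge
    constructor <;> omega

lemma rank_ub (hn : 12 ≤ n) (h3 : 3 ∣ n) (F : Finset (Sym2 (Fin n)))
    (hFdeg : ∀ u, 12 * degF F u + 12 ≤ n)
    (u v : Fin n) (huv : u ≠ v) (hp : s(u, v) ∉ F) :
    2 * rank (perturb (Jn n) F) u v < n - 2 := by
  obtain ⟨hc1, hc2⟩ := rank_compare F u v
  have hD := D_card_le F u v
  have d1 := hFdeg u
  have d2 := hFdeg v
  by_cases hc : cl n u = cl n v
  · have hguv : perturb (Jn n) F u v = true := by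
      simp only [perturb, if_neg hp, Jn_eq]
      exact decide_eq_true hc
    have hQ : (univ.filter (fun w : Fin n => w ≠ u ∧ w ≠ v ∧
        (Bool.xor (perturb (Jn n) F u v) (Bool.xor (Jn n v w) (Jn n u w)) = false))) = ∅ := by
      rw [filter_eq_empty_iff]
      intro w _
      simp [hguv, Jn_eq, ← hc]
    rw [hQ, card_empty] at hc1
    omega
  · have hguv : perturb (Jn n) F u v = false := by
      simp only [perturb, if_neg hp, Jn_eq]
      exact decide_eq_false hc
    have h3n : 3 * (n / 3) = n := Nat.mul_div_cancel' h3
    set A := univ.filter (fun w : Fin n => cl n w = cl n u) with hA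
    set B := univ.filter (fun w : Fin n => cl n w = cl n v) with hB
    have hAB : Disjoint A B := by
      rw [disjoint_left]
      intro a haA haB
      rw [hA, mem_filter] at haA
      rw [hB, mem_filter] at haB
      exact hc (haA.2 ▸ haB.2)
    have hAcard : A.card = n / 3 := cluster_card hn h3 _ (cl_lt hn h3 u)
    have hBcard : B.card = n / 3 := cluster_card hn h3 _ (cl_lt hn h3 v)
    have hsub : univ.filter (fun w : Fin n => w ≠ u ∧ w ≠ v ∧
        (Bool.xor (perturb (Jn n) F u v) (Bool.xor (Jn n v w) (Jn n u w)) = false)) ⊆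
        univ \ (A ∪ B) := by
      intro w hw
      rw [mem_filter] at hw
      obtain ⟨-, hwu, hwv, hx⟩ := hw
      rw [mem_sdiff, mem_union, hA, hB, mem_filter, mem_filter]
      refine ⟨mem_univ _, fun h => ?_⟩
      rcases h with ⟨-, h⟩ | ⟨-, h⟩
      · have h2 : cl n v ≠ cl n w := fun hh => hc ((h ▸ hh : cl n v = cl n u)).symm
        simp [hguv, Jn_eq, h.symm, h2] at hx
      · have h2 : cl n u ≠ cl n w := fun hh => hc (h ▸ hh : cl n u = cl n v)
        simp [hguv, Jn_eq, h.symm, h2] at hx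
    have hABcard : (A ∪ B).card = n / 3 + n / 3 := by
      rw [card_union_of_disjoint hAB, hAcard, hBcard]
    have hle := card_le_card hsub
    rw [card_sdiff_of_subset (subset_univ _), card_univ, Fintype.card_fin, hABcard] at hle
    omega

lemma mem_admissible (hn : 12 ≤ n) (h3 : 3 ∣ n) (F : Finset (Sym2 (Fin n)))
    (hFdiag : ∀ p ∈ F, ¬ p.IsDiag) (hFdeg : ∀ u, 12 * degF F u + 12 ≤ n) (p : Sym2 (Fin n)) :
    CTDAdmissible (perturb (Jn n) F) p ↔ p ∈ F := by
  constructor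
  · rintro ⟨u, v, rfl, huv, -, hr⟩
    by_contra hp
    have := rank_ub hn h3 F hFdeg u v huv hp
    omega
  · intro hp
    induction p using Sym2.ind with
    | _ u v =>
      have huv : u ≠ v := fun h => hFdiag _ hp (by rw [Sym2.mk_isDiag_iff]; exact h)
      obtain ⟨h1, h2⟩ := rank_lb hn h3 F hFdeg u v huv hp
      rw [rank] at h2
      obtain ⟨w, hw⟩ := card_pos.mp h2
      rw [mem_filter] at hw
      exact ⟨u, v, rfl, huv, ⟨w, hw.2⟩, h1⟩

lemma flip_perturb (F : Finset (Sym2 (Fin n))) (p : Sym2 (Fin n)) (hp : p ∈ F) :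
    flipEdge (perturb (Jn n) F) p = perturb (Jn n) (F.erase p) := by
  funext x y
  simp only [flipEdge, perturb, mem_erase]
  by_cases h : s(x, y) = p
  · rw [if_pos h, if_pos (by rw [h]; exact hp), if_neg (by rw [h]; simp), Bool.not_not]
  · rw [if_neg h]
    by_cases h2 : s(x, y) ∈ F
    · rw [if_pos h2, if_pos ⟨h, h2⟩]
    · rw [if_neg h2, if_neg (fun hh => h2 hh.2)]

lemma seq_struct (hn : 12 ≤ n) (h3 : 3 ∣ n) (E0 : Finset (Sym2 (Fin n)))
    (hE0d : ∀ p ∈ E0, ¬ p.IsDiag) (hE0deg : ∀ u, 12 * degF E0 u + 12 ≤ n) :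
    ∀ (G : SignedGraph n) (L : List (Sym2 (Fin n))) (H : SignedGraph n),
      FlipSeq CTDAdmissible G L H →
      ∀ F : Finset (Sym2 (Fin n)), F ⊆ E0 → G = perturb (Jn n) F →
      L.Nodup ∧ L.toFinset ⊆ F ∧ H = perturb (Jn n) (F \ L.toFinset) := by
  intro G L H hseq
  induction hseq with
  | nil G =>
    intro F hF hG
    refine ⟨List.nodup_nil, by simp, ?_⟩
    simp [hG]
  | @cons G H L p hadm htail ih =>
    intro F hF hG
    subst hG
    have hFdiag : ∀ q ∈ F, ¬ q.IsDiag := fun q hq => hE0d q (hF hq)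
    have hFdeg : ∀ u, 12 * degF F u + 12 ≤ n := fun u =>
      le_trans (by have := degF_mono hF u; omega) (hE0deg u)
    have hpF : p ∈ F := (mem_admissible hn h3 F hFdiag hFdeg p).mp hadm
    obtain ⟨h1, h2, h3'⟩ := ih (F.erase p) ((erase_subset p F).trans hF) (flip_perturb F p hpF)
    have hpL : p ∉ L := fun h => (mem_erase.mp (h2 (List.mem_toFinset.mpr h))).1 rfl
    refine ⟨List.nodup_cons.mpr ⟨hpL, h1⟩, ?_, ?_⟩
    · rw [List.toFinset_cons]
      intro q hq
      rcases mem_insert.mp hq with rfl | hq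
      · exact hpF
      · exact (erase_subset p F) (h2 hq)
    · have hset : F.erase p \ L.toFinset = F \ insert p L.toFinset := by
        ext q
        simp only [mem_sdiff, mem_erase, mem_insert, not_or]
        tauto
      rw [h3', List.toFinset_cons, ← hset]

lemma perturb_empty : perturb (Jn n) (∅ : Finset (Sym2 (Fin n))) = Jn n := by
  funext x y
  simp [perturb]

end CTDAux

/-- From `S_n` (which is `J_n` with a sparse edge set `E_0` flipped), every
maximal sequence of CTD-admissible flips is finite, has length `|E_0|`, flips each edge
of `E_0` exactly once and no other edge, and terminates in `J_n`. -/
theorem ctd_escapes_back_to_Jn (n : ℕ) (hn : 12 ≤ n) (h3 : 3 ∣ n)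
    (E0 : Finset (Sym2 (Fin n))) (hE0 : ∀ p ∈ E0, ¬ p.IsDiag)
    (hdeg : ∀ u : Fin n, ((E0.filter (fun p => u ∈ p)).card : ℝ) ≤ (n : ℝ) / 12 - 1) :
    (∀ (L : List (Sym2 (Fin n))) (H : SignedGraph n),
      FlipSeq CTDAdmissible (perturb (Jn n) E0) L H → L.length ≤ E0.card) ∧
    (∀ (L : List (Sym2 (Fin n))) (H : SignedGraph n),
      FlipSeq CTDAdmissible (perturb (Jn n) E0) L H →
      (∀ p, ¬ CTDAdmissible H p) →
      L.length = E0.card ∧ L.Nodup ∧ L.toFinset = E0 ∧ H = Jn n) := by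
  have hE0deg : ∀ u : Fin n, 12 * CTDAux.degF E0 u + 12 ≤ n := by
    intro u
    have h := hdeg u
    have h2 : 12 * ((E0.filter (fun p => u ∈ p)).card : ℝ) + 12 ≤ n := by
      have h3' := mul_le_mul_of_nonneg_left h (by norm_num : (0:ℝ) ≤ 12)
      rw [mul_sub, mul_div_cancel₀ _ (by norm_num : (12:ℝ) ≠ 0)] at h3'
      linarith
    exact_mod_cast h2
  constructor
  · intro L H hseq
    obtain ⟨hnd, hsub, -⟩ :=
      CTDAux.seq_struct hn h3 E0 hE0 hE0deg _ L H hseq E0 (subset_refl E0) rfl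
    calc L.length = L.toFinset.card := (List.toFinset_card_of_nodup hnd).symm
      _ ≤ E0.card := card_le_card hsub
  · intro L H hseq hmax
    obtain ⟨hnd, hsub, hH⟩ :=
      CTDAux.seq_struct hn h3 E0 hE0 hE0deg _ L H hseq E0 (subset_refl E0) rfl
    have hrem : E0 \ L.toFinset = ∅ := by
      by_contra hne
      obtain ⟨p, hp⟩ := Finset.nonempty_iff_ne_empty.mpr hne
      apply hmax p
      rw [hH]
      refine (CTDAux.mem_admissible hn h3 _ ?_ ?_ p).mpr hp
      · exact fun q hq => hE0 q (mem_sdiff.mp hq).1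
      · intro u
        refine le_trans ?_ (hE0deg u)
        have := CTDAux.degF_mono (sdiff_subset : E0 \ L.toFinset ⊆ E0) u
        omega
    have hTE : L.toFinset = E0 := subset_antisymm hsub (sdiff_eq_empty_iff_subset.mp hrem)
    refine ⟨?_, hnd, hTE, ?_⟩
    · rw [← hTE]
      exact (List.toFinset_card_of_nodup hnd).symm
    · rw [hH, hrem, CTDAux.perturb_empty]
end

section
/- Let G be a signed graph on n vertices, let C be a closest balanced state to G, and call an edge red if G and C assign it different signs. Suppose every vertex is incident to at most n/4 − 1 red edges. Then in every imbalanced triad of G that contains exactly one red edge, the red edge has strictly greater rank than each of the other two edges; consequently, in every imbalanced triad of G, every edge of maximal rank within that triad is red. -/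
open Finset

/-- Red degree of a vertex. -/
def rdeg {n : ℕ} (G C : SignedGraph n) (u : Fin n) : ℕ :=
  (univ.filter (fun v => v ≠ u ∧ G u v ≠ C u v)).card

lemma bool_red : ∀ a b c a' b' c' : Bool,
    Bool.xor a' (Bool.xor b' c') = true → a ≠ a' →
    (¬ Bool.xor a (Bool.xor b c) = true ↔ ((b ≠ b') ↔ (c ≠ c'))) := by decide

lemma bool_black : ∀ a b c a' b' c' : Bool,
    Bool.xor a' (Bool.xor b' c') = true → a = a' →
    (¬ Bool.xor a (Bool.xor b c) = true ↔ ¬ ((b ≠ b') ↔ (c ≠ c'))) := by decide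

lemma xor3_swap : ∀ a b c : Bool,
    Bool.xor a (Bool.xor b c) = Bool.xor a (Bool.xor c b) := by decide

lemma xor3_rot : ∀ a b c : Bool,
    Bool.xor b (Bool.xor c a) = Bool.xor a (Bool.xor b c) := by decide

lemma bal_swap {n : ℕ} {G : SignedGraph n} (hG : Symm G) (u v w : Fin n) :
    BalancedTriad G v u w ↔ BalancedTriad G u v w := by
  unfold BalancedTriad
  rw [hG v u, xor3_swap]

lemma bal_rot {n : ℕ} {G : SignedGraph n} (hG : Symm G) (u v w : Fin n) :
    BalancedTriad G v w u ↔ BalancedTriad G u v w := by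
  unfold BalancedTriad
  rw [hG w u, hG v u, xor3_rot]

lemma xor3_swap23 : ∀ a b c : Bool,
    Bool.xor c (Bool.xor b a) = Bool.xor a (Bool.xor b c) := by decide

lemma bal_swap23 {n : ℕ} {G : SignedGraph n} (hG : Symm G) (u v w : Fin n) :
    BalancedTriad G u w v ↔ BalancedTriad G u v w := by
  unfold BalancedTriad
  rw [hG w v, xor3_swap23]

lemma rank_symm_s10 {n : ℕ} {G : SignedGraph n} (hG : Symm G) (u v : Fin n) :
    rank G v u = rank G u v := by
  unfold rank
  congr 1
  apply Finset.filter_congr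
  intro w _
  rw [bal_swap hG]
  tauto

lemma base_card {n : ℕ} {u v : Fin n} (huv : u ≠ v) :
    (univ.filter (fun w => w ≠ u ∧ w ≠ v)).card = n - 2 := by
  have h : (univ.filter (fun w => w ≠ u ∧ w ≠ v)) = univ \ {u, v} := by
    ext w; simp [not_or]
  rw [h, card_sdiff_of_subset (subset_univ _), card_univ, Fintype.card_fin,
    card_insert_of_notMem (by simpa using huv), card_singleton]

lemma red_rank_lower {n : ℕ} {G C : SignedGraph n}
    (hCb : IsBalanced C) {u v : Fin n} (huv : u ≠ v) (hred : G u v ≠ C u v) :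
    n - 2 ≤ rank G u v + (rdeg G C u + rdeg G C v) := by
  classical
  set T : Finset (Fin n) :=
    univ.filter (fun w => w ≠ u ∧ w ≠ v ∧ ¬ ((G v w ≠ C v w) ↔ (G u w ≠ C u w))) with hT
  have hsum : rank G u v + T.card = n - 2 := by
    have hr : rank G u v =
        (univ.filter (fun w => w ≠ u ∧ w ≠ v ∧ ((G v w ≠ C v w) ↔ (G u w ≠ C u w)))).card := by
      unfold rank
      congr 1
      apply Finset.filter_congr
      intro w _
      constructor
      · rintro ⟨h1, h2, h3⟩
        exact ⟨h1, h2, (bool_red _ _ _ _ _ _ (hCb u v w huv (Ne.symm h2) (Ne.symm h1)) hred).mp h3⟩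
      · rintro ⟨h1, h2, h3⟩
        exact ⟨h1, h2, (bool_red _ _ _ _ _ _ (hCb u v w huv (Ne.symm h2) (Ne.symm h1)) hred).mpr h3⟩
    rw [hr, hT, ← base_card huv]
    have e1 : (univ.filter (fun w => w ≠ u ∧ w ≠ v ∧ ((G v w ≠ C v w) ↔ (G u w ≠ C u w))))
        = (univ.filter (fun w : Fin n => w ≠ u ∧ w ≠ v)).filter
          (fun w => (G v w ≠ C v w) ↔ (G u w ≠ C u w)) := by
      rw [Finset.filter_filter]; simp [and_assoc]
    have e2 : (univ.filter (fun w => w ≠ u ∧ w ≠ v ∧ ¬ ((G v w ≠ C v w) ↔ (G u w ≠ C u w))))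
        = (univ.filter (fun w : Fin n => w ≠ u ∧ w ≠ v)).filter
          (fun w => ¬ ((G v w ≠ C v w) ↔ (G u w ≠ C u w))) := by
      rw [Finset.filter_filter]; simp [and_assoc]
    rw [e1, e2]
    exact Finset.card_filter_add_card_filter_not _
  have hTle : T.card ≤ rdeg G C u + rdeg G C v := by
    calc T.card ≤ ((univ.filter (fun x => x ≠ u ∧ G u x ≠ C u x)) ∪
        (univ.filter (fun x => x ≠ v ∧ G v x ≠ C v x))).card := by
          apply Finset.card_le_card
          intro w hw
          rw [hT, Finset.mem_filter] at hw
          obtain ⟨-, h1, h2, h3⟩ := hw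
          rw [Finset.mem_union, Finset.mem_filter, Finset.mem_filter]
          by_cases hA : G u w ≠ C u w
          · exact Or.inl ⟨mem_univ w, h1, hA⟩
          · by_cases hB : G v w ≠ C v w
            · exact Or.inr ⟨mem_univ w, h2, hB⟩
            · exact absurd (iff_of_false hB hA) h3
      _ ≤ rdeg G C u + rdeg G C v := Finset.card_union_le _ _
  omega

lemma black_rank_upper {n : ℕ} {G C : SignedGraph n}
    (hCb : IsBalanced C) {u v : Fin n} (huv : u ≠ v) (hblk : G u v = C u v) :
    rank G u v ≤ rdeg G C u + rdeg G C v := by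
  classical
  calc rank G u v ≤ ((univ.filter (fun x => x ≠ u ∧ G u x ≠ C u x)) ∪
      (univ.filter (fun x => x ≠ v ∧ G v x ≠ C v x))).card := by
        apply Finset.card_le_card
        intro w hw
        simp only [rank, Finset.mem_filter] at hw
        obtain ⟨-, h1, h2, h3⟩ := hw
        have h4 : ¬ ((G v w ≠ C v w) ↔ (G u w ≠ C u w)) :=
          (bool_black _ _ _ _ _ _ (hCb u v w huv (Ne.symm h2) (Ne.symm h1)) hblk).mp h3
        rw [Finset.mem_union, Finset.mem_filter, Finset.mem_filter]
        by_cases hA : G u w ≠ C u w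
        · exact Or.inl ⟨mem_univ w, h1, hA⟩
        · by_cases hB : G v w ≠ C v w
          · exact Or.inr ⟨mem_univ w, h2, hB⟩
          · exact absurd (iff_of_false hB hA) h4
    _ ≤ rdeg G C u + rdeg G C v := Finset.card_union_le _ _

/-- If every vertex is incident to at most `n/4 - 1` red edges, then in every
imbalanced triad with exactly one red edge the red edge has strictly greater rank than the
other two edges; consequently every maximal-rank edge of an imbalanced triad is red. -/
theorem red_flipped_degree (n : ℕ) (G C : SignedGraph n) (hG : Symm G)
    (hC : IsClosestBalanced G C)
    (hdeg : ∀ u : Fin n,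
      ((univ.filter (fun v => v ≠ u ∧ G u v ≠ C u v)).card : ℝ) ≤ (n : ℝ) / 4 - 1) :
    (∀ u v w : Fin n, u ≠ v → w ≠ u → w ≠ v → ¬ BalancedTriad G u v w →
      G u v ≠ C u v → G v w = C v w → G u w = C u w →
      rank G v w < rank G u v ∧ rank G u w < rank G u v) ∧
    (∀ u v w : Fin n, u ≠ v → w ≠ u → w ≠ v → ¬ BalancedTriad G u v w →
      rank G v w ≤ rank G u v → rank G u w ≤ rank G u v → G u v ≠ C u v) := by
  obtain ⟨hCs, hCb, -⟩ := hC
  have hdeg' : ∀ u : Fin n, ((rdeg G C u : ℝ)) ≤ (n : ℝ) / 4 - 1 := hdeg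
  have part1 : ∀ u v w : Fin n, u ≠ v → w ≠ u → w ≠ v → ¬ BalancedTriad G u v w →
      G u v ≠ C u v → G v w = C v w → G u w = C u w →
      rank G v w < rank G u v ∧ rank G u w < rank G u v := by
    intro u v w huv hwu hwv _ hred hb1 hb2
    have hn4 : (4 : ℝ) ≤ (n : ℝ) := by
      have := hdeg' u
      have h0 : (0 : ℝ) ≤ (rdeg G C u : ℝ) := Nat.cast_nonneg _
      linarith
    have hn2 : 2 ≤ n := by
      have h2r : (2 : ℝ) ≤ (n : ℝ) := by linarith
      exact_mod_cast h2r
    have hR : n - 2 ≤ rank G u v + (rdeg G C u + rdeg G C v) :=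
      red_rank_lower hCb huv hred
    have hRr : (n : ℝ) - 2 ≤ (rank G u v : ℝ) + ((rdeg G C u : ℝ) + (rdeg G C v : ℝ)) := by
      have := (Nat.cast_le (α := ℝ)).mpr hR
      push_cast [Nat.cast_sub hn2] at this
      linarith
    have hB1 : rank G v w ≤ rdeg G C v + rdeg G C w :=
      black_rank_upper hCb (Ne.symm hwv) hb1
    have hB2 : rank G u w ≤ rdeg G C u + rdeg G C w :=
      black_rank_upper hCb (Ne.symm hwu) hb2
    have hB1r : (rank G v w : ℝ) ≤ (rdeg G C v : ℝ) + (rdeg G C w : ℝ) := by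
      exact_mod_cast hB1
    have hB2r : (rank G u w : ℝ) ≤ (rdeg G C u : ℝ) + (rdeg G C w : ℝ) := by
      exact_mod_cast hB2
    have du := hdeg' u; have dv := hdeg' v; have dw := hdeg' w
    constructor
    · exact_mod_cast show (rank G v w : ℝ) < (rank G u v : ℝ) by linarith
    · exact_mod_cast show (rank G u w : ℝ) < (rank G u v : ℝ) by linarith
  refine ⟨part1, ?_⟩
  intro u v w huv hwu hwv himb h1 h2
  intro hblk
  have hpar : ¬ ((G v w ≠ C v w) ↔ (G u w ≠ C u w)) :=
    (bool_black _ _ _ _ _ _ (hCb u v w huv (Ne.symm hwv) (Ne.symm hwu)) hblk).mp himb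
  by_cases hvw : G v w ≠ C v w
  · -- red edge is vw; apply part1 to triad (v, w, u)
    have huw : G u w = C u w := by
      by_contra h
      exact hpar (iff_of_true hvw h)
    have himb' : ¬ BalancedTriad G v w u := by
      rw [bal_rot hG]; exact himb
    have hb1 : G w u = C w u := by rw [hG w u, hCs w u]; exact huw
    have hb2 : G v u = C v u := by rw [hG v u, hCs v u]; exact hblk
    obtain ⟨-, hlt⟩ := part1 v w u (Ne.symm hwv) huv (Ne.symm hwu) himb' hvw hb1 hb2
    rw [rank_symm_s10 hG u v] at hlt
    exact absurd h1 (not_le.mpr hlt)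
  · -- red edge is uw; apply part1 to triad (u, w, v)
    have huw : G u w ≠ C u w := by
      by_contra h
      exact hpar (iff_of_false hvw (fun hh => hh h))
    have hvw' : G v w = C v w := not_ne_iff.mp hvw
    have himb' : ¬ BalancedTriad G u w v := by
      rw [bal_swap23 hG]; exact himb
    have hb1 : G w v = C w v := by rw [hG w v, hCs w v]; exact hvw'
    obtain ⟨-, hlt⟩ := part1 u w v (Ne.symm hwu) (Ne.symm huv) (Ne.symm hwv) himb' huw hb1 hblk
    exact absurd h2 (not_le.mpr hlt)
end
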